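/- Let T > 0, r ≥ 1 and β ∈ (0,1/2). Then there exists a constant C > 0, depending only on β, r and T, such that for every integer N ≥ 2 and every n ∈ {2,…,N}, ∫_{t₁}^{t_n} (t_n − s)^{−2β} · ( ∫_{t₁}^{ŝ} |(s − u)^{−β} − (ŝ − u)^{−β}|²·û^{2β−1}·(u − û)^{1−2β} du ) ds ≤ C·N^{−2(1−2β)}, where ŝ and û are the left graded-mesh points of s and u respectively. -/

import Mathlib

open Real Set MeasureTheory intervalIntegral

/-- The graded mesh point `t_n = T * (n/N)^r`. -/
noncomputable def gmesh (T r : ℝ) (N n : ℕ) : ℝ := T * ((n : ℝ) / (N : ℝ)) ^ r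

/-- Upper MVT-type bound: `x^r - y^r ≤ r x^{r-1}(x-y)` for `0 ≤ y ≤ x`, `1 ≤ r`. -/
lemma rpow_sub_rpow_le {r x y : ℝ} (hr : 1 ≤ r) (hy : 0 ≤ y) (hxy : y ≤ x) :
    x ^ r - y ^ r ≤ r * x ^ (r - 1) * (x - y) := by
  rcases eq_or_lt_of_le (hy.trans hxy) with hx | hx
  · have hx0 : x = 0 := hx.symm
    have hy0 : y = 0 := le_antisymm (hxy.trans_eq hx0) hy
    simp [hx0, hy0]
  · have hs : -1 ≤ y / x - 1 := by
      have : 0 ≤ y / x := div_nonneg hy hx.le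
      linarith
    have hB := one_add_mul_self_le_rpow_one_add hs hr
    have hyx : (1 : ℝ) + (y / x - 1) = y / x := by ring
    rw [hyx] at hB
    have hdiv : (y / x) ^ r = y ^ r / x ^ r := Real.div_rpow hy hx.le r
    rw [hdiv] at hB
    have hxr : 0 < x ^ r := Real.rpow_pos_of_pos hx r
    have hxr1 : x ^ (r - 1) = x ^ r / x := by
      rw [Real.rpow_sub hx, Real.rpow_one]
    rw [hxr1]
    have hB' : (1 + r * (y / x - 1)) * x ^ r ≤ y ^ r := (le_div_iff₀ hxr).1 hB
    have hxne : x ≠ 0 := hx.ne'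
    have expand : (1 + r * (y / x - 1)) * x ^ r = x ^ r + r * (x ^ r / x) * (y - x) := by
      field_simp
    rw [expand] at hB'
    linarith

/-- Lower MVT-type bound: `r y^{r-1}(x-y) ≤ x^r - y^r` for `0 < y ≤ x`, `1 ≤ r`. -/
lemma le_rpow_sub_rpow {r x y : ℝ} (hr : 1 ≤ r) (hy : 0 < y) (hxy : y ≤ x) :
    r * y ^ (r - 1) * (x - y) ≤ x ^ r - y ^ r := by
  have hs : -1 ≤ x / y - 1 := by
    have : 0 ≤ x / y := div_nonneg (hy.le.trans hxy) hy.le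
    linarith
  have hB := one_add_mul_self_le_rpow_one_add hs hr
  have hyx : (1 : ℝ) + (x / y - 1) = x / y := by ring
  rw [hyx] at hB
  have hdiv : (x / y) ^ r = x ^ r / y ^ r := Real.div_rpow (hy.le.trans hxy) hy.le r
  rw [hdiv] at hB
  have hyr : 0 < y ^ r := Real.rpow_pos_of_pos hy r
  have hyr1 : y ^ (r - 1) = y ^ r / y := by
    rw [Real.rpow_sub hy, Real.rpow_one]
  rw [hyr1]
  have hB' : (1 + r * (x / y - 1)) * y ^ r ≤ x ^ r := (le_div_iff₀ hyr).1 hB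
  have hyne : y ≠ 0 := hy.ne'
  have expand : (1 + r * (x / y - 1)) * y ^ r = y ^ r + r * (y ^ r / y) * (x - y) := by
    field_simp
  rw [expand] at hB'
  linarith

/-- `x^{-β} - y^{-β} ≤ β (y-x) x^{-β-1}` for `0 < x ≤ y`, `0 < β ≤ 1`. -/
lemma neg_rpow_diff_le {β x y : ℝ} (hβ0 : 0 < β) (hβ1 : β ≤ 1) (hx : 0 < x) (hxy : x ≤ y) :
    x ^ (-β) - y ^ (-β) ≤ β * (y - x) * x ^ (-β - 1) := by
  set w := y / x with hw
  have hw1 : 1 ≤ w := (one_le_div hx).2 hxy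
  have hw0 : 0 < w := lt_of_lt_of_le one_pos hw1
  have hs : (0:ℝ) ≤ w - 1 := by linarith
  have hB : w ^ β ≤ 1 + β * (w - 1) := by
    have := rpow_one_add_le_one_add_mul_self (by linarith : (-1:ℝ) ≤ w - 1) hβ0.le hβ1
    simpa [show (1:ℝ) + (w - 1) = w by ring] using this
  have hwβ : 0 < w ^ β := Real.rpow_pos_of_pos hw0 β
  -- 1 - w^{-β} ≤ β (w - 1)
  have key : 1 - w ^ (-β) ≤ β * (w - 1) := by
    have hinv : w ^ (-β) = 1 / w ^ β := by
      rw [Real.rpow_neg hw0.le, one_div]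
    rw [hinv]
    rw [sub_le_iff_le_add, ← sub_le_iff_le_add']
    rw [le_div_iff₀ hwβ]
    have h1 : (1 - β * (w - 1)) * w ^ β ≤ (1 - β * (w - 1)) * (1 + β * (w - 1)) ∨
        (1 - β * (w - 1)) ≤ 0 := by
      rcases le_or_gt (1 - β * (w - 1)) 0 with h | h
      · exact Or.inr h
      · exact Or.inl (mul_le_mul_of_nonneg_left hB h.le)
    rcases h1 with h | h
    · nlinarith [sq_nonneg (β * (w - 1))]
    · nlinarith [mul_nonpos_of_nonpos_of_nonneg h hwβ.le]
  have hyxw : y = x * w := by rw [hw]; field_simp [hx.ne']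
  have hyβ : y ^ (-β) = x ^ (-β) * w ^ (-β) := by
    rw [hyxw, Real.mul_rpow hx.le hw0.le]
  have hxβ : 0 < x ^ (-β) := Real.rpow_pos_of_pos hx _
  have step : x ^ (-β) - y ^ (-β) ≤ x ^ (-β) * (β * (w - 1)) := by
    rw [hyβ]
    have : x ^ (-β) * (1 - w ^ (-β)) ≤ x ^ (-β) * (β * (w - 1)) :=
      mul_le_mul_of_nonneg_left key hxβ.le
    linarith [this]
  refine step.trans (le_of_eq ?_)
  have hx1 : x ^ (-β - 1) = x ^ (-β) / x := by
    rw [show -β - 1 = -β - 1 from rfl, Real.rpow_sub hx, Real.rpow_one]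
  rw [hx1, hw]
  field_simp

section Mesh
variable {T r : ℝ} {N : ℕ}

lemma gmesh_nonneg (hT : 0 < T) (i : ℕ) : 0 ≤ gmesh T r N i := by
  unfold gmesh
  have h : (0:ℝ) ≤ (i : ℝ) / (N : ℝ) := by positivity
  have := Real.rpow_nonneg h r
  positivity

lemma gmesh_pos (hT : 0 < T) (hN : 1 ≤ N) {i : ℕ} (hi : 1 ≤ i) : 0 < gmesh T r N i := by
  unfold gmesh
  have hN' : (0:ℝ) < (N:ℝ) := by exact_mod_cast hN
  have hi' : (0:ℝ) < (i:ℝ) := by exact_mod_cast hi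
  exact mul_pos hT (Real.rpow_pos_of_pos (div_pos hi' hN') r)

lemma gmesh_zero (hr : 1 ≤ r) : gmesh T r N 0 = 0 := by
  unfold gmesh
  rw [Nat.cast_zero, zero_div, Real.zero_rpow (by linarith), mul_zero]

lemma gmesh_mono (hT : 0 < T) (hr : 1 ≤ r) (hN : 1 ≤ N) {i j : ℕ} (hij : i ≤ j) :
    gmesh T r N i ≤ gmesh T r N j := by
  unfold gmesh
  have hN' : (0:ℝ) < (N:ℝ) := by exact_mod_cast hN
  have h1 : (0:ℝ) ≤ (i:ℝ) / N := by positivity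
  have h2 : (i:ℝ) / N ≤ (j:ℝ) / N := (div_le_div_iff_of_pos_right hN').2 (by exact_mod_cast hij)
  exact mul_le_mul_of_nonneg_left (Real.rpow_le_rpow h1 h2 (by linarith)) hT.le

lemma gmesh_strict (hT : 0 < T) (hr : 1 ≤ r) (hN : 1 ≤ N) {i j : ℕ} (hij : i < j) :
    gmesh T r N i < gmesh T r N j := by
  unfold gmesh
  have hN' : (0:ℝ) < (N:ℝ) := by exact_mod_cast hN
  have h1 : (0:ℝ) ≤ (i:ℝ) / N := by positivity
  have h2 : (i:ℝ) / N < (j:ℝ) / N := (div_lt_div_iff_of_pos_right hN').2 (by exact_mod_cast hij)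
  exact mul_lt_mul_of_pos_left (Real.rpow_lt_rpow h1 h2 (by linarith)) hT

/-- Step upper bound. -/
lemma gmesh_step_upper (hT : 0 < T) (hr : 1 ≤ r) (hN : 1 ≤ N) (j : ℕ) :
    gmesh T r N (j + 1) - gmesh T r N j ≤
      r * T * (((j:ℝ) + 1) / N) ^ (r - 1) / N := by
  unfold gmesh
  have hN' : (0:ℝ) < (N:ℝ) := by exact_mod_cast hN
  set x := ((j:ℝ) + 1) / N with hx
  set y := (j:ℝ) / N with hy
  have hcast : ((j + 1 : ℕ) : ℝ) / (N:ℝ) = x := by push_cast [hx]; ring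
  rw [hcast]
  have hy0 : 0 ≤ y := by positivity
  have hxy : y ≤ x := by
    rw [hx, hy]
    exact (div_le_div_iff_of_pos_right hN').2 (by linarith)
  have hdiff : x - y = 1 / N := by rw [hx, hy]; field_simp; ring
  have key := rpow_sub_rpow_le hr hy0 hxy
  have : T * x ^ r - T * y ^ r ≤ T * (r * x ^ (r - 1) * (x - y)) := by
    nlinarith [key, hT.le]
  rw [hdiff] at this
  calc T * x ^ r - T * y ^ r ≤ T * (r * x ^ (r - 1) * (1 / N)) := this
    _ = r * T * x ^ (r - 1) / N := by ring

/-- Step lower bound. -/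
lemma gmesh_step_lower (hT : 0 < T) (hr : 1 ≤ r) (hN : 1 ≤ N) {j : ℕ} (hj : 1 ≤ j) :
    r * T * ((j:ℝ) / N) ^ (r - 1) / N ≤ gmesh T r N (j + 1) - gmesh T r N j := by
  unfold gmesh
  have hN' : (0:ℝ) < (N:ℝ) := by exact_mod_cast hN
  have hj' : (0:ℝ) < (j:ℝ) := by exact_mod_cast hj
  set x := ((j:ℝ) + 1) / N with hx
  set y := (j:ℝ) / N with hy
  have hcast : ((j + 1 : ℕ) : ℝ) / (N:ℝ) = x := by push_cast [hx]; ring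
  rw [hcast]
  have hy0 : 0 < y := by positivity
  have hxy : y ≤ x := by
    rw [hx, hy]
    exact (div_le_div_iff_of_pos_right hN').2 (by linarith)
  have hdiff : x - y = 1 / N := by rw [hx, hy]; field_simp; ring
  have key := le_rpow_sub_rpow hr hy0 hxy
  rw [hdiff] at key
  have : T * (r * y ^ (r - 1) * (1 / N)) ≤ T * (x ^ r - y ^ r) :=
    mul_le_mul_of_nonneg_left key hT.le
  calc r * T * y ^ (r - 1) / N = T * (r * y ^ (r - 1) * (1 / N)) := by ring
    _ ≤ T * (x ^ r - y ^ r) := this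
    _ = T * x ^ r - T * y ^ r := by ring

/-- Doubling: `t_{j+1} ≤ 2^r t_j` for `j ≥ 1`. -/
lemma gmesh_double (hT : 0 < T) (hr : 1 ≤ r) (hN : 1 ≤ N) {j : ℕ} (hj : 1 ≤ j) :
    gmesh T r N (j + 1) ≤ 2 ^ r * gmesh T r N j := by
  unfold gmesh
  have hN' : (0:ℝ) < (N:ℝ) := by exact_mod_cast hN
  have hj' : (1:ℝ) ≤ (j:ℝ) := by exact_mod_cast hj
  have h1 : ((j + 1 : ℕ) : ℝ) / N ≤ 2 * ((j:ℝ) / N) := by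
    rw [div_le_iff₀ hN']
    push_cast
    have : (j:ℝ) + 1 ≤ 2 * j := by linarith
    calc (j:ℝ) + 1 ≤ 2 * (j:ℝ) := this
      _ = 2 * ((j:ℝ) / N) * N := by field_simp
  have h0 : (0:ℝ) ≤ ((j + 1 : ℕ) : ℝ) / N := by positivity
  have h2 : (((j + 1 : ℕ) : ℝ) / N) ^ r ≤ (2 * ((j:ℝ) / N)) ^ r :=
    Real.rpow_le_rpow h0 h1 (by linarith)
  have h3 : (2 * ((j:ℝ) / N)) ^ r = 2 ^ r * ((j:ℝ) / N) ^ r :=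
    Real.mul_rpow (by norm_num) (by positivity)
  calc T * (((j + 1 : ℕ) : ℝ) / N) ^ r ≤ T * (2 ^ r * ((j:ℝ) / N) ^ r) := by
        rw [← h3]; exact mul_le_mul_of_nonneg_left h2 hT.le
    _ = 2 ^ r * (T * ((j:ℝ) / N) ^ r) := by ring

/-- Finding the mesh interval containing a point. -/
lemma gmesh_index (hT : 0 < T) (hr : 1 ≤ r) (hN : 1 ≤ N) {u : ℝ} {m : ℕ}
    (hu : gmesh T r N 1 ≤ u) (hum : u < gmesh T r N m) :
    ∃ j : ℕ, 1 ≤ j ∧ j + 1 ≤ m ∧ gmesh T r N j ≤ u ∧ u < gmesh T r N (j + 1) := by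
  have hN' : (0:ℝ) < (N:ℝ) := by exact_mod_cast hN
  have hr0 : (0:ℝ) < r := by linarith
  have hu0 : 0 < u := lt_of_lt_of_le (gmesh_pos hT hN le_rfl) hu
  have huT : 0 < u / T := div_pos hu0 hT
  set w := (N:ℝ) * (u / T) ^ (1 / r) with hw
  have hw0 : 0 < w := by
    have := Real.rpow_pos_of_pos huT (1 / r)
    positivity
  -- key equivalences
  have hpow : ∀ k : ℕ, gmesh T r N k ≤ u ↔ (k:ℝ) ≤ w := by
    intro k
    unfold gmesh
    rw [hw]
    constructor
    · intro h
      have h1 : ((k:ℝ) / N) ^ r ≤ u / T := by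
        rw [le_div_iff₀ hT]; linarith [h]
      have h2 : (((k:ℝ) / N) ^ r) ^ (1 / r) ≤ (u / T) ^ (1 / r) :=
        Real.rpow_le_rpow (Real.rpow_nonneg (by positivity) r) h1 (by positivity)
      rw [← Real.rpow_mul (by positivity : (0:ℝ) ≤ (k:ℝ)/N), mul_one_div,
        div_self (by linarith : r ≠ 0), Real.rpow_one] at h2
      calc (k:ℝ) = ((k:ℝ) / N) * N := by field_simp
        _ ≤ (u / T) ^ (1 / r) * N := by
            exact mul_le_mul_of_nonneg_right h2 hN'.le
        _ = N * (u / T) ^ (1 / r) := by ring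
    · intro h
      have h1 : (k:ℝ) / N ≤ (u / T) ^ (1 / r) := by
        rw [div_le_iff₀ hN']; linarith
      have h2 : ((k:ℝ) / N) ^ r ≤ ((u / T) ^ (1 / r)) ^ r :=
        Real.rpow_le_rpow (by positivity) h1 (by linarith)
      rw [← Real.rpow_mul huT.le, one_div, inv_mul_cancel₀ (by linarith : r ≠ 0),
        Real.rpow_one] at h2
      calc T * ((k:ℝ) / N) ^ r ≤ T * (u / T) := mul_le_mul_of_nonneg_left h2 hT.le
        _ = u := by field_simp
  refine ⟨⌊w⌋₊, ?_, ?_, ?_, ?_⟩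
  · have h1w : (1:ℝ) ≤ w := by
      have := (hpow 1).1 hu
      exact_mod_cast le_trans (by norm_num) this
    exact Nat.le_floor (by exact_mod_cast h1w)
  · -- j + 1 ≤ m from t_j ≤ u < t_m
    have htj : gmesh T r N ⌊w⌋₊ ≤ u := (hpow ⌊w⌋₊).2 (Nat.floor_le hw0.le)
    by_contra hc
    push_neg at hc
    have hmj : m ≤ ⌊w⌋₊ := by omega
    have := gmesh_mono hT hr hN hmj
    linarith [htj, hum, this]
  · exact (hpow ⌊w⌋₊).2 (Nat.floor_le hw0.le)
  · -- u < t_{j+1}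
    by_contra hc
    push_neg at hc
    have := (hpow (⌊w⌋₊ + 1)).1 hc
    have h2 : w < (⌊w⌋₊:ℝ) + 1 := Nat.lt_floor_add_one w
    push_cast at this
    linarith

end Mesh

noncomputable def Kfn (T r β : ℝ) : ℝ :=
  β^2 * ((3:ℝ)^(r-1))^2 * ((r*T)^(1-2*β) * 2^(r*(1-2*β))) *
      (2^(2*β+2)/(2*β) + 2^(1-2*β)/(2*β+1))
    + (r*T)^(1-2*β) * 2^(r*(1-2*β)) / (1-2*β)

noncomputable def Kbig (T r β : ℝ) : ℝ :=
  Kfn T r β * (T^(2*β-1) * (r*T)^(1-2*β) * 2^(1-2*β))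

lemma Kfn_pos {T r β : ℝ} (hT : 0 < T) (hr : 1 ≤ r) (hβ0 : 0 < β) (hβh : β < 1/2) :
    0 < Kfn T r β := by
  have h1 : (0:ℝ) < 1 - 2*β := by linarith
  have h2 : (0:ℝ) < r * T := by nlinarith
  have h3 : (0:ℝ) < (r*T)^(1-2*β) := Real.rpow_pos_of_pos h2 _
  have h4 : (0:ℝ) < (2:ℝ)^(r*(1-2*β)) := Real.rpow_pos_of_pos (by norm_num) _
  have h5 : (0:ℝ) < (2:ℝ)^(2*β+2) := Real.rpow_pos_of_pos (by norm_num) _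
  have h6 : (0:ℝ) < (2:ℝ)^(1-2*β) := Real.rpow_pos_of_pos (by norm_num) _
  have h7 : (0:ℝ) < (3:ℝ)^(r-1) := Real.rpow_pos_of_pos (by norm_num) _
  have h8 : (0:ℝ) < 2*β := by linarith
  have h9 : (0:ℝ) < 2*β+1 := by linarith
  unfold Kfn
  have hA : (0:ℝ) < 2^(2*β+2)/(2*β) + 2^(1-2*β)/(2*β+1) :=
    add_pos (div_pos h5 h8) (div_pos h6 h9)
  have hB : (0:ℝ) < (r*T)^(1-2*β) * 2^(r*(1-2*β)) / (1-2*β) :=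
    div_pos (mul_pos h3 h4) h1
  positivity

lemma Kbig_pos {T r β : ℝ} (hT : 0 < T) (hr : 1 ≤ r) (hβ0 : 0 < β) (hβh : β < 1/2) :
    0 < Kbig T r β := by
  have h1 := Kfn_pos hT hr hβ0 hβh
  have h2 : (0:ℝ) < r * T := by nlinarith
  have h3 : (0:ℝ) < (r*T)^(1-2*β) := Real.rpow_pos_of_pos h2 _
  have h4 : (0:ℝ) < T^(2*β-1) := Real.rpow_pos_of_pos hT _
  have h6 : (0:ℝ) < (2:ℝ)^(1-2*β) := Real.rpow_pos_of_pos (by norm_num) _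
  unfold Kbig
  positivity

/-- Either-or splitting of a product of powers. -/
lemma eo_split {β tt u : ℝ} (hβ0 : 0 < β) (hβh : β < 1/2) (hu : 0 < u) (hut : u ≤ tt) (hx : 0 < tt - u) :
    (tt - u) ^ (-(2*β)-2) * u ^ (2*β-1) ≤
      (tt/2) ^ (-(2*β)-2) * u ^ (2*β-1) + (tt/2) ^ (2*β-1) * (tt - u) ^ (-(2*β)-2) := by
  have htt : 0 < tt := lt_of_lt_of_le hu hut
  have htt2 : 0 < tt/2 := by linarith
  rcases le_total u (tt/2) with h | h
  · have hx2 : tt/2 ≤ tt - u := by linarith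
    have h1 : (tt - u) ^ (-(2*β)-2) ≤ (tt/2) ^ (-(2*β)-2) :=
      Real.rpow_le_rpow_of_nonpos htt2 hx2 (by linarith)
    have h2 : (0:ℝ) ≤ u ^ (2*β-1) := Real.rpow_nonneg hu.le _
    nlinarith [Real.rpow_nonneg htt2.le (2*β-1), Real.rpow_nonneg hx.le (-(2*β)-2),
      mul_le_mul_of_nonneg_right h1 h2,
      mul_nonneg (Real.rpow_nonneg htt2.le (2*β-1)) (Real.rpow_nonneg hx.le (-(2*β)-2))]
  · have h1 : u ^ (2*β-1) ≤ (tt/2) ^ (2*β-1) :=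
      Real.rpow_le_rpow_of_nonpos htt2 h (by linarith)
    have h2 : (0:ℝ) ≤ (tt - u) ^ (-(2*β)-2) := Real.rpow_nonneg hx.le _
    nlinarith [mul_le_mul_of_nonneg_left h1 h2,
      mul_nonneg (Real.rpow_nonneg htt2.le (-(2*β)-2)) (Real.rpow_nonneg hu.le (2*β-1))]

section Core
variable {T r β : ℝ} {N : ℕ}

/-- Bound on the step-function weight factors. -/
lemma hatfac_bound (hT : 0 < T) (hr : 1 ≤ r) (hβ0 : 0 < β) (hβh : β < 1/2)
    (hN : 1 ≤ N) (hat : ℝ → ℝ)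
    (hhat : ∀ i : ℕ, i < N →
      ∀ s ∈ Set.Ico (gmesh T r N i) (gmesh T r N (i + 1)), hat s = gmesh T r N i)
    {u : ℝ} {m : ℕ} (hm : m ≤ N) (hu1 : gmesh T r N 1 ≤ u) (hum : u < gmesh T r N m) :
    (hat u) ^ (2*β-1) * (u - hat u) ^ (1-2*β) ≤
      (r*T)^(1-2*β) * ((N:ℝ)^(-(1-2*β))) * (2^(r*(1-2*β)) * u ^ (2*β-1)) := by
  obtain ⟨j, hj1, hjm, hju, huj⟩ := gmesh_index hT hr hN hu1 hum
  have hjN : j < N := by omega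
  have hhu : hat u = gmesh T r N j := hhat j hjN u ⟨hju, huj⟩
  have hN' : (0:ℝ) < (N:ℝ) := by exact_mod_cast hN
  have hu0 : 0 < u := lt_of_lt_of_le (gmesh_pos hT hN le_rfl) hu1
  have htj : 0 < gmesh T r N j := gmesh_pos hT hN hj1
  -- factor 1 : (t j)^(2β-1) ≤ u^(2β-1) * 2^{r(1-2β)}
  have hdb : gmesh T r N (j+1) ≤ 2^r * gmesh T r N j := gmesh_double hT hr hN hj1
  have h2r : (0:ℝ) < (2:ℝ)^r := Real.rpow_pos_of_pos (by norm_num) _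
  have hlow : u * ((2:ℝ)^r)⁻¹ ≤ gmesh T r N j := by
    rw [← div_eq_mul_inv, div_le_iff₀ h2r]
    calc u ≤ 2^r * gmesh T r N j := le_trans huj.le hdb
      _ = gmesh T r N j * 2^r := by ring
  have hlow0 : 0 < u * ((2:ℝ)^r)⁻¹ := by positivity
  have hf1 : (gmesh T r N j) ^ (2*β-1) ≤ (u * ((2:ℝ)^r)⁻¹) ^ (2*β-1) :=
    Real.rpow_le_rpow_of_nonpos hlow0 hlow (by linarith)
  have hexp : ((2:ℝ)^(-r)) ^ (2*β-1) = (2:ℝ)^(r*(1-2*β)) := by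
    rw [← Real.rpow_mul (by norm_num : (0:ℝ) ≤ 2),
      show -r*(2*β-1) = r*(1-2*β) by ring]
  have hf1' : (u * ((2:ℝ)^r)⁻¹) ^ (2*β-1) = u ^ (2*β-1) * (2:ℝ)^(r*(1-2*β)) := by
    rw [← Real.rpow_neg (by norm_num : (0:ℝ) ≤ 2),
      Real.mul_rpow hu0.le (Real.rpow_nonneg (by norm_num) _), hexp]
  -- factor 2 : (u - t j)^(1-2β) ≤ (rT)^(1-2β) N^{-(1-2β)}
  have hstep := gmesh_step_upper hT hr hN j
  have hle1 : ((j:ℝ)+1)/N ≤ 1 := by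
    rw [div_le_one hN']
    have : (j:ℕ)+1 ≤ N := by omega
    exact_mod_cast this
  have hpow1 : (((j:ℝ)+1)/N)^(r-1) ≤ 1 :=
    Real.rpow_le_one (by positivity) hle1 (by linarith)
  have hsu : u - gmesh T r N j ≤ r*T/N := by
    have h0 : u - gmesh T r N j ≤ gmesh T r N (j+1) - gmesh T r N j := by
      linarith [huj.le]
    have hrT : (0:ℝ) ≤ r * T := by nlinarith
    have h1 : r * T * (((j:ℝ)+1)/N) ^ (r-1) ≤ r*T := by nlinarith [Real.rpow_nonneg (by positivity : (0:ℝ) ≤ ((j:ℝ)+1)/N) (r-1)]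
    have h2 : r * T * (((j:ℝ)+1)/N) ^ (r-1) / N ≤ r*T/N := (div_le_div_iff_of_pos_right hN').2 h1
    linarith
  have hsu0 : 0 ≤ u - gmesh T r N j := sub_nonneg.2 hju
  have hf2 : (u - gmesh T r N j)^(1-2*β) ≤ (r*T/N)^(1-2*β) :=
    Real.rpow_le_rpow hsu0 hsu (by linarith)
  have hf2' : (r*T/N)^(1-2*β) = (r*T)^(1-2*β) * (N:ℝ)^(-(1-2*β)) := by
    rw [Real.div_rpow (by nlinarith : (0:ℝ) ≤ r*T) hN'.le, Real.rpow_neg hN'.le, div_eq_mul_inv]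
  rw [hhu]
  calc (gmesh T r N j) ^ (2*β-1) * (u - gmesh T r N j) ^ (1-2*β)
      ≤ (u ^ (2*β-1) * (2:ℝ)^(r*(1-2*β))) * ((r*T)^(1-2*β) * (N:ℝ)^(-(1-2*β))) := by
        apply mul_le_mul (hf1.trans_eq hf1') (hf2.trans_eq hf2')
          (Real.rpow_nonneg hsu0 _)
        positivity
    _ = (r*T)^(1-2*β) * ((N:ℝ)^(-(1-2*β))) * (2^(r*(1-2*β)) * u ^ (2*β-1)) := by ring

end Core

/-- Algebraic bound for the "far" integral. -/
lemma far_alg {β c3 h hs tt : ℝ} (hβ0 : 0 < β) (hβh : β < 1/2) (htt : 0 < tt)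
    (hhs : 0 < hs) (hhstt : hs ≤ tt) (hh0 : 0 ≤ h) (hh : h ≤ c3 * hs) :
    h^2 * ((tt/2)^(-(2*β)-2) * (tt^(2*β)/(2*β)) + (tt/2)^(2*β-1) * (hs^(-(2*β)-1)/(2*β+1)))
      ≤ c3^2 * (2^(2*β+2)/(2*β) + 2^(1-2*β)/(2*β+1)) * (tt^(2*β-1) * hs^(1-2*β)) := by
  have hc3 : 0 ≤ c3 := by nlinarith
  have hβp : (0:ℝ) < 2*β := by linarith
  have hβq : (0:ℝ) < 2*β+1 := by linarith
  have htt2 : (0:ℝ) < tt/2 := by linarith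
  have hsq : h^2 ≤ c3^2 * hs^2 := by nlinarith
  -- abbreviations
  have E2 : (tt/2)^(2*β-1) = 2^(1-2*β) * tt^(2*β-1) := by
    rw [Real.div_rpow htt.le (by norm_num : (0:ℝ) ≤ 2), div_eq_mul_inv,
      ← Real.rpow_neg (by norm_num : (0:ℝ) ≤ 2), show -(2*β-1) = 1-2*β by ring]
    ring
  have E3 : hs^2 * hs^(-(2*β)-1) = hs^(1-2*β) := by
    rw [← Real.rpow_natCast hs 2, ← Real.rpow_add hhs]
    congr 1
    push_cast
    ring
  have E1 : (tt/2)^(-(2*β)-2) * tt^(2*β) ≤ 2^(2*β+2) * (tt^(2*β-1) * hs^(-(2*β)-1)) := by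
    have a1 : (tt/2)^(-(2*β)-2) = 2^(2*β+2) * tt^(-(2*β)-2) := by
      rw [Real.div_rpow htt.le (by norm_num : (0:ℝ) ≤ 2), div_eq_mul_inv,
        ← Real.rpow_neg (by norm_num : (0:ℝ) ≤ 2), show -(-(2*β)-2) = 2*β+2 by ring]
      ring
    have a2 : tt^(-(2*β)-2) * tt^(2*β) = tt^(2*β-1) * tt^(-(2*β)-1) := by
      rw [← Real.rpow_add htt, ← Real.rpow_add htt]
      ring_nf
    have b1 : tt^(-(2*β)-1) ≤ hs^(-(2*β)-1) :=
      Real.rpow_le_rpow_of_nonpos hhs hhstt (by linarith)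
    calc (tt/2)^(-(2*β)-2) * tt^(2*β) = 2^(2*β+2) * (tt^(2*β-1) * tt^(-(2*β)-1)) := by
          rw [a1, mul_assoc, a2]
      _ ≤ 2^(2*β+2) * (tt^(2*β-1) * hs^(-(2*β)-1)) := by
          have h2 : (0:ℝ) ≤ (2:ℝ)^(2*β+2) := Real.rpow_nonneg (by norm_num) _
          have h3 : (0:ℝ) ≤ tt^(2*β-1) := Real.rpow_nonneg htt.le _
          exact mul_le_mul_of_nonneg_left (mul_le_mul_of_nonneg_left b1 h3) h2
  -- main computation
  have g1 : h^2 * ((tt/2)^(-(2*β)-2) * tt^(2*β)) ≤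
      c3^2 * 2^(2*β+2) * (tt^(2*β-1) * hs^(1-2*β)) := by
    have s1 : h^2 * ((tt/2)^(-(2*β)-2) * tt^(2*β)) ≤
        (c3^2 * hs^2) * (2^(2*β+2) * (tt^(2*β-1) * hs^(-(2*β)-1))) := by
      apply mul_le_mul hsq E1 (by positivity)
      positivity
    calc h^2 * ((tt/2)^(-(2*β)-2) * tt^(2*β)) ≤
        (c3^2 * hs^2) * (2^(2*β+2) * (tt^(2*β-1) * hs^(-(2*β)-1))) := s1
      _ = c3^2 * 2^(2*β+2) * (tt^(2*β-1) * (hs^2 * hs^(-(2*β)-1))) := by ring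
      _ = c3^2 * 2^(2*β+2) * (tt^(2*β-1) * hs^(1-2*β)) := by rw [E3]
  have g2 : h^2 * ((tt/2)^(2*β-1) * hs^(-(2*β)-1)) ≤
      c3^2 * 2^(1-2*β) * (tt^(2*β-1) * hs^(1-2*β)) := by
    have s1 : h^2 * ((tt/2)^(2*β-1) * hs^(-(2*β)-1)) ≤
        (c3^2 * hs^2) * ((tt/2)^(2*β-1) * hs^(-(2*β)-1)) := by
      apply mul_le_mul_of_nonneg_right hsq
      have := Real.rpow_nonneg htt2.le (2*β-1)
      have := Real.rpow_nonneg hhs.le (-(2*β)-1)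
      positivity
    calc h^2 * ((tt/2)^(2*β-1) * hs^(-(2*β)-1)) ≤
        (c3^2 * hs^2) * ((tt/2)^(2*β-1) * hs^(-(2*β)-1)) := s1
      _ = c3^2 * (2^(1-2*β) * tt^(2*β-1)) * (hs^2 * hs^(-(2*β)-1)) := by rw [E2]; ring
      _ = c3^2 * 2^(1-2*β) * (tt^(2*β-1) * hs^(1-2*β)) := by rw [E3]; ring
  have g1' := mul_le_mul_of_nonneg_right g1 (by positivity : (0:ℝ) ≤ (2*β)⁻¹)
  have g2' := mul_le_mul_of_nonneg_right g2 (by positivity : (0:ℝ) ≤ (2*β+1)⁻¹)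
  calc h^2 * ((tt/2)^(-(2*β)-2) * (tt^(2*β)/(2*β)) + (tt/2)^(2*β-1) * (hs^(-(2*β)-1)/(2*β+1)))
      = h^2 * ((tt/2)^(-(2*β)-2) * tt^(2*β)) * (2*β)⁻¹
        + h^2 * ((tt/2)^(2*β-1) * hs^(-(2*β)-1)) * (2*β+1)⁻¹ := by ring
    _ ≤ c3^2 * 2^(2*β+2) * (tt^(2*β-1) * hs^(1-2*β)) * (2*β)⁻¹
        + c3^2 * 2^(1-2*β) * (tt^(2*β-1) * hs^(1-2*β)) * (2*β+1)⁻¹ := by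
        exact add_le_add g1' g2'
    _ = c3^2 * (2^(2*β+2)/(2*β) + 2^(1-2*β)/(2*β+1)) * (tt^(2*β-1) * hs^(1-2*β)) := by
        ring

section CoreMain
variable {T r β : ℝ} {N : ℕ}

lemma hatfac_nonneg (hT : 0 < T) (hr : 1 ≤ r) (hN : 1 ≤ N) (hat : ℝ → ℝ)
    (hhat : ∀ i : ℕ, i < N →
      ∀ s ∈ Set.Ico (gmesh T r N i) (gmesh T r N (i + 1)), hat s = gmesh T r N i)
    {u : ℝ} {m : ℕ} (hm : m ≤ N) (hu1 : gmesh T r N 1 ≤ u) (hum : u < gmesh T r N m) :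
    0 ≤ (hat u) ^ (2*β-1) * (u - hat u) ^ (1-2*β) := by
  obtain ⟨j, hj1, hjm, hju, huj⟩ := gmesh_index hT hr hN hu1 hum
  have hhu : hat u = gmesh T r N j := hhat j (by omega) u ⟨hju, huj⟩
  rw [hhu]
  have h1 := Real.rpow_nonneg (gmesh_nonneg hT (N := N) (r := r) j) (2*β-1)
  have h2 := Real.rpow_nonneg (sub_nonneg.2 hju) (1-2*β)
  exact mul_nonneg h1 h2

set_option maxHeartbeats 2000000 in
lemma core_bound (hT : 0 < T) (hr : 1 ≤ r) (hβ0 : 0 < β) (hβh : β < 1/2)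
    (hN : 2 ≤ N) (hat : ℝ → ℝ)
    (hhat : ∀ i : ℕ, i < N →
      ∀ s ∈ Set.Ico (gmesh T r N i) (gmesh T r N (i + 1)), hat s = gmesh T r N i)
    {n : ℕ} (hn2 : 2 ≤ n) (hnN : n ≤ N) {s : ℝ}
    (hs1 : gmesh T r N 1 ≤ s) (hsn : s < gmesh T r N n) :
    (∫ u in (gmesh T r N 1)..(hat s),
        |(s - u) ^ (-β) - (hat s - u) ^ (-β)| ^ 2 * (hat u) ^ (2 * β - 1)
          * (u - hat u) ^ (1 - 2 * β))
      ≤ Kbig T r β * ((N:ℝ) ^ (-(1 - 2*β)))^2 * (s / T) ^ ((2*β - 1)/r) := by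
  have hN1 : 1 ≤ N := by omega
  have hN' : (0:ℝ) < N := by exact_mod_cast hN1
  have hrpos : (0:ℝ) < r := by linarith
  have hbpos : (0:ℝ) < 1 - 2*β := by linarith
  have hs0 : 0 < s := lt_of_lt_of_le (gmesh_pos hT hN1 le_rfl) hs1
  have hrT : (0:ℝ) < r * T := by positivity
  have hRHS0 : 0 ≤ Kbig T r β * ((N:ℝ) ^ (-(1 - 2*β)))^2 * (s / T) ^ ((2*β - 1)/r) := by
    have h1 := (Kbig_pos hT hr hβ0 hβh).le
    have h2 := Real.rpow_nonneg (by positivity : (0:ℝ) ≤ s/T) ((2*β-1)/r)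
    have h3 := Real.rpow_nonneg (le_of_lt hN') (-(1-2*β))
    positivity
  obtain ⟨i, hi1, hin, hts, hst⟩ := gmesh_index hT hr hN1 hs1 hsn
  have hiN : i < N := by omega
  have hhs : hat s = gmesh T r N i := hhat i hiN s ⟨hts, hst⟩
  rw [hhs]
  rcases eq_or_lt_of_le hi1 with h1 | hk2
  · rw [← h1, intervalIntegral.integral_same]
    exact hRHS0
  obtain ⟨k, rfl⟩ : ∃ k, i = k + 1 := ⟨i - 1, by omega⟩
  have hk1 : 1 ≤ k := by omega
  have hk2N : k + 2 ≤ N := by omega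
  -- basic mesh facts
  have ht1pos : 0 < gmesh T r N 1 := gmesh_pos hT hN1 le_rfl
  have ht1k : gmesh T r N 1 ≤ gmesh T r N k := gmesh_mono hT hr hN1 hk1
  have htkpos : 0 < gmesh T r N k := gmesh_pos hT hN1 hk1
  have htk : gmesh T r N k < gmesh T r N (k+1) := gmesh_strict hT hr hN1 (by omega)
  have htk2' : gmesh T r N (k+1) < gmesh T r N (k+1+1) := gmesh_strict hT hr hN1 (by omega)
  have httpos : 0 < gmesh T r N (k+1) := gmesh_pos hT hN1 (by omega)
  have hstep_pos : 0 < gmesh T r N (k+1) - gmesh T r N k := by linarith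
  have hstep_le : gmesh T r N (k+1) - gmesh T r N k ≤ gmesh T r N (k+1) := by
    linarith [htkpos]
  have hh0 : 0 ≤ s - gmesh T r N (k+1) := by linarith [hts]
  have hsk2 : s < gmesh T r N (k+1+1) := hst
  -- h ≤ 3^(r-1) * hstep
  have hh3 : s - gmesh T r N (k+1) ≤ 3^(r-1) * (gmesh T r N (k+1) - gmesh T r N k) := by
    have hsl := gmesh_step_lower hT hr hN1 hk1
    have hsu2 := gmesh_step_upper hT hr hN1 (k+1)
    have hcast : (((k+1:ℕ):ℝ)+1)/(N:ℝ) = ((k:ℝ)+2)/N := by push_cast; ring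
    rw [hcast] at hsu2
    have h32 : (((k:ℝ)+2)/N)^(r-1) ≤ 3^(r-1) * ((k:ℝ)/N)^(r-1) := by
      have hk1' : (1:ℝ) ≤ (k:ℝ) := by exact_mod_cast hk1
      have hc : ((k:ℝ)+2)/N ≤ 3*((k:ℝ)/N) := by
        rw [div_le_iff₀ hN']
        calc (k:ℝ)+2 ≤ 3*(k:ℝ) := by linarith
          _ = 3*((k:ℝ)/N)*N := by field_simp
      calc (((k:ℝ)+2)/N)^(r-1) ≤ (3*((k:ℝ)/N))^(r-1) :=
            Real.rpow_le_rpow (by positivity) hc (by linarith)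
        _ = 3^(r-1) * ((k:ℝ)/N)^(r-1) :=
            Real.mul_rpow (by norm_num) (by positivity)
    have e3 : r*T*(((k:ℝ)+2)/N)^(r-1)/N ≤ 3^(r-1) * (r*T*((k:ℝ)/N)^(r-1)/N) := by
      rw [show 3^(r-1) * (r*T*((k:ℝ)/N)^(r-1)/N) = r*T*(3^(r-1)*((k:ℝ)/N)^(r-1))/N by ring]
      apply (div_le_div_iff_of_pos_right hN').2
      nlinarith [h32, hrT.le]
    have e4 : 3^(r-1) * (r*T*((k:ℝ)/N)^(r-1)/N) ≤
        3^(r-1) * (gmesh T r N (k+1) - gmesh T r N k) :=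
      mul_le_mul_of_nonneg_left hsl (Real.rpow_nonneg (by norm_num) _)
    linarith
  by_cases hint : IntervalIntegrable (fun u =>
      |(s - u) ^ (-β) - (gmesh T r N (k+1) - u) ^ (-β)| ^ 2 * (hat u) ^ (2 * β - 1)
        * (u - hat u) ^ (1 - 2 * β)) volume (gmesh T r N 1) (gmesh T r N (k+1))
  case neg =>
    rw [intervalIntegral.integral_undef hint]
    exact hRHS0
  case pos =>
  have hss1 : Set.uIcc (gmesh T r N 1) (gmesh T r N k) ⊆
      Set.uIcc (gmesh T r N 1) (gmesh T r N (k+1)) := by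
    rw [Set.uIcc_of_le ht1k, Set.uIcc_of_le (by linarith : gmesh T r N 1 ≤ gmesh T r N (k+1))]
    exact Set.Icc_subset_Icc le_rfl htk.le
  have hss2 : Set.uIcc (gmesh T r N k) (gmesh T r N (k+1)) ⊆
      Set.uIcc (gmesh T r N 1) (gmesh T r N (k+1)) := by
    rw [Set.uIcc_of_le htk.le, Set.uIcc_of_le (by linarith : gmesh T r N 1 ≤ gmesh T r N (k+1))]
    exact Set.Icc_subset_Icc ht1k le_rfl
  have hint1 := hint.mono_set hss1
  have hint2 := hint.mono_set hss2
  rw [← intervalIntegral.integral_add_adjacent_intervals hint1 hint2]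
  have hQpos : (0:ℝ) < (r*T)^(1-2*β) * ((N:ℝ)^(-(1-2*β))) :=
    mul_pos (Real.rpow_pos_of_pos hrT _) (Real.rpow_pos_of_pos hN' _)
  have h2rb : (0:ℝ) < (2:ℝ)^(r*(1-2*β)) := Real.rpow_pos_of_pos (by norm_num) _
  have h3r : (0:ℝ) < (3:ℝ)^(r-1) := Real.rpow_pos_of_pos (by norm_num) _
  -- ===== FAR pointwise =====
  have hfar_pt : ∀ u ∈ Set.Icc (gmesh T r N 1) (gmesh T r N k),
      |(s - u) ^ (-β) - (gmesh T r N (k+1) - u) ^ (-β)| ^ 2 * (hat u) ^ (2 * β - 1)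
        * (u - hat u) ^ (1 - 2 * β) ≤
      (β^2 * (s - gmesh T r N (k+1))^2 *
          ((r*T)^(1-2*β) * ((N:ℝ)^(-(1-2*β))) * 2^(r*(1-2*β)))) *
        ((gmesh T r N (k+1)/2)^(-(2*β)-2) * u^(2*β-1)
          + (gmesh T r N (k+1)/2)^(2*β-1) * (gmesh T r N (k+1) - u)^(-(2*β)-2)) := by
    intro u hu
    have hu0 : 0 < u := lt_of_lt_of_le ht1pos hu.1
    have hutt : u < gmesh T r N (k+1) := lt_of_le_of_lt hu.2 htk
    have hxpos : 0 < gmesh T r N (k+1) - u := by linarith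
    have hxy : gmesh T r N (k+1) - u ≤ s - u := by linarith [hts]
    have hba : (s-u)^(-β) ≤ (gmesh T r N (k+1)-u)^(-β) :=
      Real.rpow_le_rpow_of_nonpos hxpos hxy (by linarith)
    have hdiff := neg_rpow_diff_le hβ0 (by linarith) hxpos hxy
    rw [show (s-u) - (gmesh T r N (k+1)-u) = s - gmesh T r N (k+1) by ring] at hdiff
    have hsq : |(s - u) ^ (-β) - (gmesh T r N (k+1) - u) ^ (-β)| ^ 2 ≤
        β^2 * (s - gmesh T r N (k+1))^2 * (gmesh T r N (k+1)-u)^(-(2*β)-2) := by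
      rw [abs_sub_comm, abs_of_nonneg (sub_nonneg.2 hba)]
      have h2 := pow_le_pow_left₀ (sub_nonneg.2 hba) hdiff 2
      calc ((gmesh T r N (k+1)-u)^(-β) - (s-u)^(-β))^2 ≤
          (β * (s - gmesh T r N (k+1)) * (gmesh T r N (k+1)-u)^(-β-1))^2 := h2
        _ = β^2 * (s - gmesh T r N (k+1))^2 * ((gmesh T r N (k+1)-u)^(-β-1))^2 := by ring
        _ = β^2 * (s - gmesh T r N (k+1))^2 * (gmesh T r N (k+1)-u)^(-(2*β)-2) := by
            rw [sq ((gmesh T r N (k+1)-u)^(-β-1)), ← Real.rpow_add hxpos,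
              show (-β-1)+(-β-1) = -(2*β)-2 by ring]
    have hB := hatfac_bound hT hr hβ0 hβh hN1 hat hhat (show k+1 ≤ N by omega) hu.1 hutt
    have hB0 : 0 ≤ (hat u) ^ (2*β-1) * (u - hat u) ^ (1-2*β) :=
      hatfac_nonneg hT hr hN1 hat hhat (show k+1 ≤ N by omega) hu.1 hutt
    have hEO := eo_split hβ0 hβh hu0 hutt.le hxpos
    have habs0 : (0:ℝ) ≤ |(s - u) ^ (-β) - (gmesh T r N (k+1) - u) ^ (-β)| ^ 2 := by
      positivity
    calc |(s - u) ^ (-β) - (gmesh T r N (k+1) - u) ^ (-β)| ^ 2 * (hat u) ^ (2 * β - 1)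
          * (u - hat u) ^ (1 - 2 * β)
        = |(s - u) ^ (-β) - (gmesh T r N (k+1) - u) ^ (-β)| ^ 2 *
            ((hat u) ^ (2*β-1) * (u - hat u) ^ (1-2*β)) := by ring
      _ ≤ (β^2 * (s - gmesh T r N (k+1))^2 * (gmesh T r N (k+1)-u)^(-(2*β)-2)) *
            ((r*T)^(1-2*β) * ((N:ℝ)^(-(1-2*β))) * (2^(r*(1-2*β)) * u ^ (2*β-1))) := by
          apply mul_le_mul hsq hB hB0
          have := Real.rpow_nonneg hxpos.le (-(2*β)-2)
          positivity
      _ = (β^2 * (s - gmesh T r N (k+1))^2 *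
            ((r*T)^(1-2*β) * ((N:ℝ)^(-(1-2*β))) * 2^(r*(1-2*β)))) *
            ((gmesh T r N (k+1)-u)^(-(2*β)-2) * u^(2*β-1)) := by ring
      _ ≤ _ := by
          apply mul_le_mul_of_nonneg_left hEO
          have h1 := sq_nonneg β
          have h2 := sq_nonneg (s - gmesh T r N (k+1))
          exact mul_nonneg (mul_nonneg h1 h2) (by positivity)
  -- ===== FAR integral =====
  have hIu_int : IntervalIntegrable (fun u : ℝ => u^(2*β-1)) volume
      (gmesh T r N 1) (gmesh T r N k) := intervalIntegrable_rpow' (by linarith)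
  have hIx_int : IntervalIntegrable (fun u : ℝ => (gmesh T r N (k+1) - u)^(-(2*β)-2)) volume
      (gmesh T r N 1) (gmesh T r N k) := by
    apply ContinuousOn.intervalIntegrable
    apply ContinuousOn.rpow_const (continuousOn_const.sub (continuousOn_id))
    intro x hx
    left
    rw [Set.uIcc_of_le ht1k] at hx
    have : 0 < gmesh T r N (k+1) - x := by linarith [hx.2, htk]
    exact ne_of_gt this
  have hIu_le : (∫ u in (gmesh T r N 1)..(gmesh T r N k), u^(2*β-1)) ≤
      (gmesh T r N (k+1))^(2*β)/(2*β) := by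
    rw [integral_rpow (Or.inl (by linarith : (-1:ℝ) < 2*β-1))]
    rw [show 2*β-1+1 = 2*β by ring]
    have h1 : 0 ≤ (gmesh T r N 1)^(2*β) := Real.rpow_nonneg ht1pos.le _
    have h2 : (gmesh T r N k)^(2*β) ≤ (gmesh T r N (k+1))^(2*β) :=
      Real.rpow_le_rpow htkpos.le htk.le (by linarith)
    apply (div_le_div_iff_of_pos_right (by linarith : (0:ℝ) < 2*β)).2
    linarith
  have hIx_le : (∫ u in (gmesh T r N 1)..(gmesh T r N k),
      (gmesh T r N (k+1) - u)^(-(2*β)-2)) ≤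
      (gmesh T r N (k+1) - gmesh T r N k)^(-(2*β)-1)/(2*β+1) := by
    rw [intervalIntegral.integral_comp_sub_left (fun v => v^(-(2*β)-2)) (gmesh T r N (k+1))]
    rw [integral_rpow (Or.inr ⟨by intro hcc; linarith [hβ0] , by
      rw [Set.uIcc_of_le (by linarith [ht1k] :
        gmesh T r N (k+1) - gmesh T r N k ≤ gmesh T r N (k+1) - gmesh T r N 1)]
      intro hmem
      have := hmem.1
      linarith [hstep_pos]⟩)]
    rw [show -(2*β)-2+1 = -(2*β)-1 by ring]
    have hne1 : (-(2*β)-1 : ℝ) ≠ 0 := by intro hcc; linarith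
    have hne2 : (2*β+1 : ℝ) ≠ 0 := by intro hcc; linarith
    have hA0 : 0 ≤ (gmesh T r N (k+1) - gmesh T r N 1)^(-(2*β)-1) :=
      Real.rpow_nonneg (by linarith [ht1k, htk]) _
    have hval : ((gmesh T r N (k+1) - gmesh T r N 1)^(-(2*β)-1) -
        (gmesh T r N (k+1) - gmesh T r N k)^(-(2*β)-1))/(-(2*β)-1) =
        ((gmesh T r N (k+1) - gmesh T r N k)^(-(2*β)-1) -
        (gmesh T r N (k+1) - gmesh T r N 1)^(-(2*β)-1))/(2*β+1) := by
      rw [div_eq_div_iff hne1 hne2]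
      ring
    rw [hval]
    apply (div_le_div_iff_of_pos_right (by linarith : (0:ℝ) < 2*β+1)).2
    linarith
  have hfar_int : (∫ u in (gmesh T r N 1)..(gmesh T r N k),
      |(s - u) ^ (-β) - (gmesh T r N (k+1) - u) ^ (-β)| ^ 2 * (hat u) ^ (2 * β - 1)
        * (u - hat u) ^ (1 - 2 * β)) ≤
      (β^2 * ((3:ℝ)^(r-1))^2 * ((r*T)^(1-2*β) * 2^(r*(1-2*β))) *
        (2^(2*β+2)/(2*β) + 2^(1-2*β)/(2*β+1))) *
      (((N:ℝ)^(-(1-2*β))) * ((gmesh T r N (k+1))^(2*β-1) *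
        (gmesh T r N (k+1) - gmesh T r N k)^(1-2*β))) := by
    set c : ℝ := β^2 * (s - gmesh T r N (k+1))^2 *
      ((r*T)^(1-2*β) * ((N:ℝ)^(-(1-2*β))) * 2^(r*(1-2*β))) with hc_def
    have hc0 : 0 ≤ c := by
      rw [hc_def]
      exact mul_nonneg (mul_nonneg (sq_nonneg β) (sq_nonneg _))
        (by positivity)
    have hp1 : (0:ℝ) ≤ (gmesh T r N (k+1)/2)^(-(2*β)-2) :=
      Real.rpow_nonneg (by linarith) _
    have hp2 : (0:ℝ) ≤ (gmesh T r N (k+1)/2)^(2*β-1) :=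
      Real.rpow_nonneg (by linarith) _
    have hmaj_int : IntervalIntegrable (fun u =>
        c * ((gmesh T r N (k+1)/2)^(-(2*β)-2) * u^(2*β-1)
          + (gmesh T r N (k+1)/2)^(2*β-1) * (gmesh T r N (k+1) - u)^(-(2*β)-2))) volume
        (gmesh T r N 1) (gmesh T r N k) := by
      apply IntervalIntegrable.const_mul
      exact (hIu_int.const_mul _).add (hIx_int.const_mul _)
    have hmono := intervalIntegral.integral_mono_on ht1k hint1 hmaj_int hfar_pt
    have heval : (∫ u in (gmesh T r N 1)..(gmesh T r N k),
        c * ((gmesh T r N (k+1)/2)^(-(2*β)-2) * u^(2*β-1)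
          + (gmesh T r N (k+1)/2)^(2*β-1) * (gmesh T r N (k+1) - u)^(-(2*β)-2))) =
        c * ((gmesh T r N (k+1)/2)^(-(2*β)-2) *
              (∫ u in (gmesh T r N 1)..(gmesh T r N k), u^(2*β-1))
          + (gmesh T r N (k+1)/2)^(2*β-1) *
              (∫ u in (gmesh T r N 1)..(gmesh T r N k),
                (gmesh T r N (k+1) - u)^(-(2*β)-2))) := by
      rw [intervalIntegral.integral_const_mul,
        intervalIntegral.integral_add (hIu_int.const_mul _) (hIx_int.const_mul _),
        intervalIntegral.integral_const_mul, intervalIntegral.integral_const_mul]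
    have hbd : c * ((gmesh T r N (k+1)/2)^(-(2*β)-2) *
              (∫ u in (gmesh T r N 1)..(gmesh T r N k), u^(2*β-1))
          + (gmesh T r N (k+1)/2)^(2*β-1) *
              (∫ u in (gmesh T r N 1)..(gmesh T r N k),
                (gmesh T r N (k+1) - u)^(-(2*β)-2))) ≤
        c * ((gmesh T r N (k+1)/2)^(-(2*β)-2) * ((gmesh T r N (k+1))^(2*β)/(2*β))
          + (gmesh T r N (k+1)/2)^(2*β-1) *
            ((gmesh T r N (k+1) - gmesh T r N k)^(-(2*β)-1)/(2*β+1))) := by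
      apply mul_le_mul_of_nonneg_left _ hc0
      exact add_le_add (mul_le_mul_of_nonneg_left hIu_le hp1)
        (mul_le_mul_of_nonneg_left hIx_le hp2)
    have hfa := far_alg (c3 := (3:ℝ)^(r-1)) (h := s - gmesh T r N (k+1))
      (hs := gmesh T r N (k+1) - gmesh T r N k) (tt := gmesh T r N (k+1))
      hβ0 hβh httpos hstep_pos hstep_le hh0 hh3
    calc (∫ u in (gmesh T r N 1)..(gmesh T r N k),
        |(s - u) ^ (-β) - (gmesh T r N (k+1) - u) ^ (-β)| ^ 2 * (hat u) ^ (2 * β - 1)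
          * (u - hat u) ^ (1 - 2 * β))
        ≤ c * ((gmesh T r N (k+1)/2)^(-(2*β)-2) * ((gmesh T r N (k+1))^(2*β)/(2*β))
          + (gmesh T r N (k+1)/2)^(2*β-1) *
            ((gmesh T r N (k+1) - gmesh T r N k)^(-(2*β)-1)/(2*β+1))) := by
          calc _ ≤ _ := hmono
            _ = _ := heval
            _ ≤ _ := hbd
      _ = (β^2 * ((r*T)^(1-2*β) * ((N:ℝ)^(-(1-2*β))) * 2^(r*(1-2*β)))) *
          ((s - gmesh T r N (k+1))^2 *
            ((gmesh T r N (k+1)/2)^(-(2*β)-2) * ((gmesh T r N (k+1))^(2*β)/(2*β))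
            + (gmesh T r N (k+1)/2)^(2*β-1) *
              ((gmesh T r N (k+1) - gmesh T r N k)^(-(2*β)-1)/(2*β+1)))) := by
          rw [hc_def]; ring
      _ ≤ (β^2 * ((r*T)^(1-2*β) * ((N:ℝ)^(-(1-2*β))) * 2^(r*(1-2*β)))) *
          (((3:ℝ)^(r-1))^2 * (2^(2*β+2)/(2*β) + 2^(1-2*β)/(2*β+1)) *
            ((gmesh T r N (k+1))^(2*β-1) *
              (gmesh T r N (k+1) - gmesh T r N k)^(1-2*β))) := by
          apply mul_le_mul_of_nonneg_left hfa
          exact mul_nonneg (sq_nonneg β) (by positivity)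
      _ = _ := by ring
  -- ===== NEAR pointwise =====
  have hnear_pt : ∀ u ∈ Set.Icc (gmesh T r N k) (gmesh T r N (k+1)),
      |(s - u) ^ (-β) - (gmesh T r N (k+1) - u) ^ (-β)| ^ 2 * (hat u) ^ (2 * β - 1)
        * (u - hat u) ^ (1 - 2 * β) ≤
      ((r*T)^(1-2*β) * ((N:ℝ)^(-(1-2*β))) * (gmesh T r N k)^(2*β-1)) *
        (gmesh T r N (k+1) - u)^(-(2*β)) := by
    intro u hu
    rcases eq_or_lt_of_le hu.2 with heq | hlt
    · rw [heq]
      have hattt : hat (gmesh T r N (k+1)) = gmesh T r N (k+1) :=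
        hhat (k+1) (by omega) (gmesh T r N (k+1)) (Set.mem_Ico.mpr ⟨le_rfl, htk2'⟩)
      rw [hattt, sub_self (gmesh T r N (k+1)),
        Real.zero_rpow (ne_of_gt (by linarith) : (1-2*β:ℝ) ≠ 0),
        Real.zero_rpow (ne_of_lt (by linarith) : (-(2*β):ℝ) ≠ 0)]
      simp only [mul_zero]
      exact le_rfl
    · have hu0 : 0 < u := lt_of_lt_of_le htkpos hu.1
      have hxpos : 0 < gmesh T r N (k+1) - u := by linarith
      have hhu : hat u = gmesh T r N k := hhat k (by omega) u ⟨hu.1, hlt⟩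
      rw [hhu]
      have hxy : gmesh T r N (k+1) - u ≤ s - u := by linarith [hts]
      have hba : (s-u)^(-β) ≤ (gmesh T r N (k+1)-u)^(-β) :=
        Real.rpow_le_rpow_of_nonpos hxpos hxy (by linarith)
      have hsu0 : (0:ℝ) ≤ (s-u)^(-β) := Real.rpow_nonneg (by linarith [hts]) _
      have hsq : |(s - u) ^ (-β) - (gmesh T r N (k+1) - u) ^ (-β)| ^ 2 ≤
          (gmesh T r N (k+1) - u)^(-(2*β)) := by
        rw [abs_sub_comm, abs_of_nonneg (sub_nonneg.2 hba)]
        have h1 : (gmesh T r N (k+1)-u)^(-β) - (s-u)^(-β) ≤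
            (gmesh T r N (k+1)-u)^(-β) := by linarith
        have h2 := pow_le_pow_left₀ (sub_nonneg.2 hba) h1 2
        calc ((gmesh T r N (k+1)-u)^(-β) - (s-u)^(-β))^2 ≤
            ((gmesh T r N (k+1)-u)^(-β))^2 := h2
          _ = (gmesh T r N (k+1) - u)^(-(2*β)) := by
              rw [sq, ← Real.rpow_add hxpos, show (-β)+(-β) = -(2*β) by ring]
      -- (u - t_k)^(1-2β) ≤ (rT)^(1-2β) N^{-(1-2β)}
      have hstep_up := gmesh_step_upper hT hr hN1 k
      have hle1 : ((k:ℝ)+1)/N ≤ 1 := by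
        rw [div_le_one hN']
        have : (k:ℕ)+1 ≤ N := by omega
        exact_mod_cast this
      have hpow1 : (((k:ℝ)+1)/N)^(r-1) ≤ 1 :=
        Real.rpow_le_one (by positivity) hle1 (by linarith)
      have hsu : u - gmesh T r N k ≤ r*T/N := by
        have h0 : u - gmesh T r N k ≤ gmesh T r N (k+1) - gmesh T r N k := by linarith
        have h1 : r * T * (((k:ℝ)+1)/N) ^ (r-1) ≤ r*T := by
          nlinarith [Real.rpow_nonneg (by positivity : (0:ℝ) ≤ ((k:ℝ)+1)/N) (r-1)]
        have h2 : r * T * (((k:ℝ)+1)/N) ^ (r-1) / N ≤ r*T/N := (div_le_div_iff_of_pos_right hN').2 h1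
        linarith
      have hsu0' : 0 ≤ u - gmesh T r N k := sub_nonneg.2 hu.1
      have hf2 : (u - gmesh T r N k)^(1-2*β) ≤ (r*T)^(1-2*β) * (N:ℝ)^(-(1-2*β)) := by
        calc (u - gmesh T r N k)^(1-2*β) ≤ (r*T/N)^(1-2*β) :=
              Real.rpow_le_rpow hsu0' hsu (by linarith)
          _ = (r*T)^(1-2*β) * (N:ℝ)^(-(1-2*β)) := by
              rw [Real.div_rpow hrT.le hN'.le, Real.rpow_neg hN'.le, div_eq_mul_inv]
      have htke : (0:ℝ) ≤ (gmesh T r N k)^(2*β-1) := Real.rpow_nonneg htkpos.le _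
      calc |(s - u) ^ (-β) - (gmesh T r N (k+1) - u) ^ (-β)| ^ 2 *
            (gmesh T r N k) ^ (2 * β - 1) * (u - gmesh T r N k) ^ (1 - 2 * β)
          ≤ ((gmesh T r N (k+1) - u)^(-(2*β)) * (gmesh T r N k) ^ (2*β-1)) *
            ((r*T)^(1-2*β) * (N:ℝ)^(-(1-2*β))) := by
            apply mul_le_mul (mul_le_mul_of_nonneg_right hsq htke) hf2
              (Real.rpow_nonneg hsu0' _)
            have := Real.rpow_nonneg hxpos.le (-(2*β))
            positivity
        _ = ((r*T)^(1-2*β) * ((N:ℝ)^(-(1-2*β))) * (gmesh T r N k)^(2*β-1)) *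
            (gmesh T r N (k+1) - u)^(-(2*β)) := by ring
  -- ===== NEAR integral =====
  have hnear_int : (∫ u in (gmesh T r N k)..(gmesh T r N (k+1)),
      |(s - u) ^ (-β) - (gmesh T r N (k+1) - u) ^ (-β)| ^ 2 * (hat u) ^ (2 * β - 1)
        * (u - hat u) ^ (1 - 2 * β)) ≤
      ((r*T)^(1-2*β) * 2^(r*(1-2*β)) / (1-2*β)) *
      (((N:ℝ)^(-(1-2*β))) * ((gmesh T r N (k+1))^(2*β-1) *
        (gmesh T r N (k+1) - gmesh T r N k)^(1-2*β))) := by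
    have hmaj_int : IntervalIntegrable (fun u =>
        ((r*T)^(1-2*β) * ((N:ℝ)^(-(1-2*β))) * (gmesh T r N k)^(2*β-1)) *
          (gmesh T r N (k+1) - u)^(-(2*β))) volume
        (gmesh T r N k) (gmesh T r N (k+1)) := by
      apply IntervalIntegrable.const_mul
      have hbase : IntervalIntegrable (fun v : ℝ => v^(-(2*β))) volume
          (gmesh T r N (k+1) - gmesh T r N k) (gmesh T r N (k+1) - gmesh T r N (k+1)) :=
        intervalIntegrable_rpow' (by linarith)
      have := hbase.comp_sub_left (gmesh T r N (k+1))
      simpa using this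
    have hmono := intervalIntegral.integral_mono_on htk.le hint2 hmaj_int hnear_pt
    have hval : (∫ u in (gmesh T r N k)..(gmesh T r N (k+1)),
        ((r*T)^(1-2*β) * ((N:ℝ)^(-(1-2*β))) * (gmesh T r N k)^(2*β-1)) *
          (gmesh T r N (k+1) - u)^(-(2*β))) =
        ((r*T)^(1-2*β) * ((N:ℝ)^(-(1-2*β))) * (gmesh T r N k)^(2*β-1)) *
          ((gmesh T r N (k+1) - gmesh T r N k)^(1-2*β)/(1-2*β)) := by
      rw [intervalIntegral.integral_const_mul]
      congr 1
      rw [intervalIntegral.integral_comp_sub_left (fun v => v^(-(2*β))) (gmesh T r N (k+1))]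
      rw [sub_self]
      rw [integral_rpow (Or.inl (by linarith : (-1:ℝ) < -(2*β)))]
      rw [Real.zero_rpow (by intro hcc; linarith : (-(2*β)+1 : ℝ) ≠ 0)]
      rw [show -(2*β)+1 = 1-2*β by ring]
      ring
    -- t_k^(2β-1) ≤ 2^{r(1-2β)} t_{k+1}^(2β-1)
    have hdb2 : gmesh T r N (k+1) ≤ 2^r * gmesh T r N k := gmesh_double hT hr hN1 hk1
    have h2r : (0:ℝ) < (2:ℝ)^r := Real.rpow_pos_of_pos (by norm_num) _
    have hlow : gmesh T r N (k+1) * ((2:ℝ)^r)⁻¹ ≤ gmesh T r N k := by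
      rw [← div_eq_mul_inv, div_le_iff₀ h2r]
      calc gmesh T r N (k+1) ≤ 2^r * gmesh T r N k := hdb2
        _ = gmesh T r N k * 2^r := by ring
    have hlow0 : 0 < gmesh T r N (k+1) * ((2:ℝ)^r)⁻¹ := by positivity
    have hf1 : (gmesh T r N k) ^ (2*β-1) ≤
        (gmesh T r N (k+1))^(2*β-1) * (2:ℝ)^(r*(1-2*β)) := by
      have hstep1 : (gmesh T r N k) ^ (2*β-1) ≤
          (gmesh T r N (k+1) * ((2:ℝ)^r)⁻¹) ^ (2*β-1) :=
        Real.rpow_le_rpow_of_nonpos hlow0 hlow (by linarith)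
      have hexp : ((2:ℝ)^(-r)) ^ (2*β-1) = (2:ℝ)^(r*(1-2*β)) := by
        rw [← Real.rpow_mul (by norm_num : (0:ℝ) ≤ 2),
          show -r*(2*β-1) = r*(1-2*β) by ring]
      have : (gmesh T r N (k+1) * ((2:ℝ)^r)⁻¹) ^ (2*β-1) =
          (gmesh T r N (k+1))^(2*β-1) * (2:ℝ)^(r*(1-2*β)) := by
        rw [← Real.rpow_neg (by norm_num : (0:ℝ) ≤ 2),
          Real.mul_rpow httpos.le (Real.rpow_nonneg (by norm_num) _), hexp]
      linarith [hstep1, this.le, this.ge]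
    calc (∫ u in (gmesh T r N k)..(gmesh T r N (k+1)),
        |(s - u) ^ (-β) - (gmesh T r N (k+1) - u) ^ (-β)| ^ 2 * (hat u) ^ (2 * β - 1)
          * (u - hat u) ^ (1 - 2 * β))
        ≤ ((r*T)^(1-2*β) * ((N:ℝ)^(-(1-2*β))) * (gmesh T r N k)^(2*β-1)) *
          ((gmesh T r N (k+1) - gmesh T r N k)^(1-2*β)/(1-2*β)) := by
          calc _ ≤ _ := hmono
            _ = _ := hval
      _ ≤ ((r*T)^(1-2*β) * ((N:ℝ)^(-(1-2*β))) *
            ((gmesh T r N (k+1))^(2*β-1) * (2:ℝ)^(r*(1-2*β)))) *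
          ((gmesh T r N (k+1) - gmesh T r N k)^(1-2*β)/(1-2*β)) := by
          apply mul_le_mul_of_nonneg_right _ (by
            have := Real.rpow_nonneg hstep_pos.le (1-2*β)
            positivity)
          exact mul_le_mul_of_nonneg_left hf1 hQpos.le
      _ = ((r*T)^(1-2*β) * 2^(r*(1-2*β)) / (1-2*β)) *
          (((N:ℝ)^(-(1-2*β))) * ((gmesh T r N (k+1))^(2*β-1) *
            (gmesh T r N (k+1) - gmesh T r N k)^(1-2*β))) := by ring
  -- ===== combine and convert =====
  have hsum : (∫ u in (gmesh T r N 1)..(gmesh T r N k),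
      |(s - u) ^ (-β) - (gmesh T r N (k+1) - u) ^ (-β)| ^ 2 * (hat u) ^ (2 * β - 1)
        * (u - hat u) ^ (1 - 2 * β)) +
      (∫ u in (gmesh T r N k)..(gmesh T r N (k+1)),
      |(s - u) ^ (-β) - (gmesh T r N (k+1) - u) ^ (-β)| ^ 2 * (hat u) ^ (2 * β - 1)
        * (u - hat u) ^ (1 - 2 * β)) ≤
      Kfn T r β * (((N:ℝ)^(-(1-2*β))) * ((gmesh T r N (k+1))^(2*β-1) *
        (gmesh T r N (k+1) - gmesh T r N k)^(1-2*β))) := by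
    have := add_le_add hfar_int hnear_int
    calc _ ≤ _ := this
      _ = Kfn T r β * (((N:ℝ)^(-(1-2*β))) * ((gmesh T r N (k+1))^(2*β-1) *
        (gmesh T r N (k+1) - gmesh T r N k)^(1-2*β))) := by
          unfold Kfn
          ring
  -- conversion to s
  have hconv : ((N:ℝ)^(-(1-2*β))) * ((gmesh T r N (k+1))^(2*β-1) *
      (gmesh T r N (k+1) - gmesh T r N k)^(1-2*β)) ≤
      (T^(2*β-1) * (r*T)^(1-2*β) * 2^(1-2*β)) *
        (((N:ℝ) ^ (-(1 - 2*β)))^2 * (s / T) ^ ((2*β - 1)/r)) := by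
    set q : ℝ := ((k:ℝ)+1)/N with hq_def
    have hq0 : 0 < q := by rw [hq_def]; positivity
    have htt_eq : gmesh T r N (k+1) = T * q^r := by
      unfold gmesh
      rw [hq_def]
      norm_num
    have e1 : (gmesh T r N (k+1))^(2*β-1) = T^(2*β-1) * q^(r*(2*β-1)) := by
      rw [htt_eq, Real.mul_rpow hT.le (Real.rpow_nonneg hq0.le r),
        ← Real.rpow_mul hq0.le]
    have hstep_up := gmesh_step_upper hT hr hN1 k
    have e2 : (gmesh T r N (k+1) - gmesh T r N k)^(1-2*β) ≤
        (r*T)^(1-2*β) * q^((r-1)*(1-2*β)) * (N:ℝ)^(-(1-2*β)) := by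
      have h1 : gmesh T r N (k+1) - gmesh T r N k ≤ r*T*q^(r-1)/N := hstep_up
      calc (gmesh T r N (k+1) - gmesh T r N k)^(1-2*β) ≤ (r*T*q^(r-1)/N)^(1-2*β) :=
            Real.rpow_le_rpow hstep_pos.le h1 (by linarith)
        _ = (r*T)^(1-2*β) * q^((r-1)*(1-2*β)) * (N:ℝ)^(-(1-2*β)) := by
            rw [Real.div_rpow (by positivity) hN'.le,
              Real.mul_rpow hrT.le (Real.rpow_nonneg hq0.le _),
              ← Real.rpow_mul hq0.le, Real.rpow_neg hN'.le, div_eq_mul_inv]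
    have e3 : q^(r*(2*β-1)) * q^((r-1)*(1-2*β)) = q^(2*β-1) := by
      rw [← Real.rpow_add hq0]
      congr 1
      ring
    have e4 : q^(2*β-1) ≤ 2^(1-2*β) * (s/T)^((2*β-1)/r) := by
      have hdb3 : gmesh T r N (k+1+1) ≤ 2^r * gmesh T r N (k+1) :=
        gmesh_double hT hr hN1 (by omega)
      have hs2T : s/T ≤ (2*q)^r := by
        rw [div_le_iff₀ hT]
        have h1 : s ≤ 2^r * (T * q^r) := by
          rw [← htt_eq]
          linarith [hsk2, hdb3]
        calc s ≤ 2^r * (T * q^r) := h1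
          _ = (2^r * q^r) * T := by ring
          _ = (2*q)^r * T := by
              rw [← Real.mul_rpow (by norm_num : (0:ℝ) ≤ 2) hq0.le]
      have hsT0 : 0 < s/T := by positivity
      have h5 : (s/T)^(1/r) ≤ 2*q := by
        calc (s/T)^(1/r) ≤ ((2*q)^r)^(1/r) :=
              Real.rpow_le_rpow hsT0.le hs2T (by positivity)
          _ = (2*q)^(r*(1/r)) := by
              rw [← Real.rpow_mul (by positivity : (0:ℝ) ≤ 2*q)]
          _ = 2*q := by
              rw [mul_one_div, div_self (by linarith : r ≠ 0), Real.rpow_one]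
      have h6 : (s/T)^(1/r) * 2⁻¹ ≤ q := by
        have h2 : (0:ℝ) < 2 := by norm_num
        rw [← div_eq_mul_inv, div_le_iff₀ h2]
        linarith
      have h60 : 0 < (s/T)^(1/r) * 2⁻¹ := by
        have := Real.rpow_pos_of_pos hsT0 (1/r)
        positivity
      have h7 : q^(2*β-1) ≤ ((s/T)^(1/r) * 2⁻¹)^(2*β-1) :=
        Real.rpow_le_rpow_of_nonpos h60 h6 (by linarith)
      have h8 : ((s/T)^(1/r) * 2⁻¹)^(2*β-1) = (s/T)^((2*β-1)/r) * 2^(1-2*β) := by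
        rw [Real.mul_rpow (Real.rpow_nonneg hsT0.le _) (by norm_num : (0:ℝ) ≤ 2⁻¹),
          ← Real.rpow_mul hsT0.le, show 1/r*(2*β-1) = (2*β-1)/r by ring,
          show ((2:ℝ)⁻¹) = (2:ℝ)^(-1 : ℝ) by rw [Real.rpow_neg_one],
          ← Real.rpow_mul (by norm_num : (0:ℝ) ≤ 2),
          show (-1 : ℝ)*(2*β-1) = 1-2*β by ring]
      linarith [h7, h8.le, h8.ge]
    calc ((N:ℝ)^(-(1-2*β))) * ((gmesh T r N (k+1))^(2*β-1) *
        (gmesh T r N (k+1) - gmesh T r N k)^(1-2*β))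
        ≤ ((N:ℝ)^(-(1-2*β))) * ((T^(2*β-1) * q^(r*(2*β-1))) *
          ((r*T)^(1-2*β) * q^((r-1)*(1-2*β)) * (N:ℝ)^(-(1-2*β)))) := by
          apply mul_le_mul_of_nonneg_left _ (Real.rpow_nonneg hN'.le _)
          rw [e1]
          apply mul_le_mul_of_nonneg_left e2
          have := Real.rpow_nonneg hq0.le (r*(2*β-1))
          have := Real.rpow_pos_of_pos hT (2*β-1)
          positivity
      _ = (T^(2*β-1) * (r*T)^(1-2*β)) * (((N:ℝ)^(-(1-2*β)))^2 *
          (q^(r*(2*β-1)) * q^((r-1)*(1-2*β)))) := by ring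
      _ = (T^(2*β-1) * (r*T)^(1-2*β)) * (((N:ℝ)^(-(1-2*β)))^2 * q^(2*β-1)) := by
          rw [e3]
      _ ≤ (T^(2*β-1) * (r*T)^(1-2*β)) * (((N:ℝ)^(-(1-2*β)))^2 *
          (2^(1-2*β) * (s/T)^((2*β-1)/r))) := by
          apply mul_le_mul_of_nonneg_left
          · apply mul_le_mul_of_nonneg_left e4
            positivity
          · have := Real.rpow_pos_of_pos hT (2*β-1)
            have := Real.rpow_pos_of_pos hrT (1-2*β)
            positivity
      _ = (T^(2*β-1) * (r*T)^(1-2*β) * 2^(1-2*β)) *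
          (((N:ℝ) ^ (-(1 - 2*β)))^2 * (s / T) ^ ((2*β - 1)/r)) := by ring
  have hKfn0 := (Kfn_pos hT hr hβ0 hβh).le
  calc (∫ u in (gmesh T r N 1)..(gmesh T r N k),
      |(s - u) ^ (-β) - (gmesh T r N (k+1) - u) ^ (-β)| ^ 2 * (hat u) ^ (2 * β - 1)
        * (u - hat u) ^ (1 - 2 * β)) +
      (∫ u in (gmesh T r N k)..(gmesh T r N (k+1)),
      |(s - u) ^ (-β) - (gmesh T r N (k+1) - u) ^ (-β)| ^ 2 * (hat u) ^ (2 * β - 1)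
        * (u - hat u) ^ (1 - 2 * β))
      ≤ Kfn T r β * (((N:ℝ)^(-(1-2*β))) * ((gmesh T r N (k+1))^(2*β-1) *
        (gmesh T r N (k+1) - gmesh T r N k)^(1-2*β))) := hsum
    _ ≤ Kfn T r β * ((T^(2*β-1) * (r*T)^(1-2*β) * 2^(1-2*β)) *
        (((N:ℝ) ^ (-(1 - 2*β)))^2 * (s / T) ^ ((2*β - 1)/r))) :=
        mul_le_mul_of_nonneg_left hconv hKfn0
    _ = Kbig T r β * ((N:ℝ) ^ (-(1 - 2*β)))^2 * (s / T) ^ ((2*β - 1)/r) := by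
        unfold Kbig
        ring

end CoreMain

set_option maxHeartbeats 2000000 in
/-- Double-integral kernel bound with singular weight (equation `eq.diffSqureDoub2`). -/
theorem stmt16 (T r β : ℝ) (hT : 0 < T) (hr : 1 ≤ r)
    (hβ : β ∈ Set.Ioo (0:ℝ) (1/2)) :
    ∃ C > (0:ℝ), ∀ N : ℕ, 2 ≤ N → ∀ hat : ℝ → ℝ,
      (∀ i : ℕ, i < N →
        ∀ s ∈ Set.Ico (gmesh T r N i) (gmesh T r N (i + 1)), hat s = gmesh T r N i) →
      ∀ n : ℕ, 2 ≤ n → n ≤ N →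
        (∫ s in (gmesh T r N 1)..(gmesh T r N n),
            (gmesh T r N n - s) ^ (-(2 * β)) *
              ∫ u in (gmesh T r N 1)..(hat s),
                |(s - u) ^ (-β) - (hat s - u) ^ (-β)| ^ 2
                  * (hat u) ^ (2 * β - 1) * (u - hat u) ^ (1 - 2 * β))
          ≤ C * (N : ℝ) ^ (-(2 * (1 - 2 * β))) := by
  obtain ⟨hβ0, hβh⟩ := hβ
  have hrpos : (0:ℝ) < r := by linarith
  have hbpos : (0:ℝ) < 1 - 2*β := by linarith
  have hc1 : (-1:ℝ) < (2*β-1)/r := by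
    rw [lt_div_iff₀ hrpos]
    nlinarith
  have hc0 : (2*β-1)/r ≤ 0 := by
    apply div_nonpos_of_nonpos_of_nonneg <;> linarith
  have hcb : 0 ≤ (2*β-1)/r + (1-2*β) := by
    have h1 : (2*β-1) ≤ (2*β-1)/r := by
      rw [le_div_iff₀ hrpos]
      nlinarith
    linarith
  have hc1' : (0:ℝ) < 1 + (2*β-1)/r := by linarith
  have hTb : (0:ℝ) < T^(1-2*β) := Real.rpow_pos_of_pos hT _
  refine ⟨Kbig T r β * (T^(1-2*β) * (2/(1-2*β) + 2/(1+(2*β-1)/r))), ?_, ?_⟩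
  · have h1 := Kbig_pos hT hr hβ0 hβh
    have h2 : (0:ℝ) < 2/(1-2*β) + 2/(1+(2*β-1)/r) :=
      add_pos (div_pos (by norm_num) hbpos) (div_pos (by norm_num) hc1')
    positivity
  intro N hN hat hhat n hn2 hnN
  have hN1 : 1 ≤ N := by omega
  have hN' : (0:ℝ) < N := by exact_mod_cast hN1
  have hNB0 : (0:ℝ) < (N:ℝ)^(-(1-2*β)) := Real.rpow_pos_of_pos hN' _
  have hNBsq : ((N:ℝ)^(-(1-2*β)))^2 = (N:ℝ)^(-(2*(1-2*β))) := by
    rw [sq, ← Real.rpow_add hN']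
    congr 1
    ring
  have ht1pos : 0 < gmesh T r N 1 := gmesh_pos hT hN1 le_rfl
  have ht1n : gmesh T r N 1 ≤ gmesh T r N n := gmesh_mono hT hr hN1 (by omega)
  have htnpos : 0 < gmesh T r N n := gmesh_pos hT hN1 (by omega)
  have htnT : gmesh T r N n ≤ T := by
    have h1 : ((n:ℝ)/N) ≤ 1 := by
      rw [div_le_one hN']
      exact_mod_cast hnN
    have h2 : ((n:ℝ)/N)^r ≤ 1 := Real.rpow_le_one (by positivity) h1 hrpos.le
    calc gmesh T r N n = T * ((n:ℝ)/N)^r := rfl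
      _ ≤ T * 1 := mul_le_mul_of_nonneg_left h2 hT.le
      _ = T := mul_one T
  have hRHS0 : 0 ≤ Kbig T r β * (T^(1-2*β) * (2/(1-2*β) + 2/(1+(2*β-1)/r))) *
      (N:ℝ)^(-(2*(1-2*β))) := by
    have h1 := (Kbig_pos hT hr hβ0 hβh).le
    have h2 : (0:ℝ) ≤ 2/(1-2*β) + 2/(1+(2*β-1)/r) :=
      (add_pos (div_pos (by norm_num) hbpos) (div_pos (by norm_num) hc1')).le
    have h3 : (0:ℝ) ≤ (N:ℝ)^(-(2*(1-2*β))) := Real.rpow_nonneg hN'.le _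
    positivity
  by_cases hF : IntervalIntegrable (fun s =>
      (gmesh T r N n - s) ^ (-(2 * β)) *
        ∫ u in (gmesh T r N 1)..(hat s),
          |(s - u) ^ (-β) - (hat s - u) ^ (-β)| ^ 2
            * (hat u) ^ (2 * β - 1) * (u - hat u) ^ (1 - 2 * β)) volume
      (gmesh T r N 1) (gmesh T r N n)
  case neg =>
    rw [intervalIntegral.integral_undef hF]
    exact hRHS0
  case pos =>
  -- pointwise bound by G
  have hpt : ∀ s ∈ Set.Icc (gmesh T r N 1) (gmesh T r N n),
      (gmesh T r N n - s) ^ (-(2 * β)) *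
        (∫ u in (gmesh T r N 1)..(hat s),
          |(s - u) ^ (-β) - (hat s - u) ^ (-β)| ^ 2
            * (hat u) ^ (2 * β - 1) * (u - hat u) ^ (1 - 2 * β)) ≤
      (Kbig T r β * ((N:ℝ)^(-(1-2*β)))^2) *
        ((s/T)^((2*β-1)/r) * (gmesh T r N n - s)^(-(2*β))) := by
    intro s hs
    rcases eq_or_lt_of_le hs.2 with heq | hlt
    · rw [← heq, sub_self, Real.zero_rpow (ne_of_lt (by linarith) : (-(2*β):ℝ) ≠ 0),
        zero_mul, mul_zero]
      simp
    · have hcore := core_bound hT hr hβ0 hβh hN hat hhat hn2 hnN hs.1 hlt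
      have hnn : (0:ℝ) ≤ (gmesh T r N n - s) ^ (-(2*β)) :=
        Real.rpow_nonneg (by linarith) _
      calc (gmesh T r N n - s) ^ (-(2 * β)) *
          (∫ u in (gmesh T r N 1)..(hat s),
            |(s - u) ^ (-β) - (hat s - u) ^ (-β)| ^ 2
              * (hat u) ^ (2 * β - 1) * (u - hat u) ^ (1 - 2 * β))
          ≤ (gmesh T r N n - s) ^ (-(2 * β)) *
            (Kbig T r β * ((N:ℝ) ^ (-(1 - 2*β)))^2 * (s / T) ^ ((2*β - 1)/r)) :=
            mul_le_mul_of_nonneg_left hcore hnn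
        _ = (Kbig T r β * ((N:ℝ)^(-(1-2*β)))^2) *
            ((s/T)^((2*β-1)/r) * (gmesh T r N n - s)^(-(2*β))) := by ring
  -- integrability of G
  have hG1 : IntervalIntegrable (fun s : ℝ => (gmesh T r N n - s)^(-(2*β))) volume
      (gmesh T r N 1) (gmesh T r N n) := by
    have hbase : IntervalIntegrable (fun v : ℝ => v^(-(2*β))) volume
        (gmesh T r N n - gmesh T r N 1) (gmesh T r N n - gmesh T r N n) :=
      intervalIntegrable_rpow' (by linarith)
    have := hbase.comp_sub_left (gmesh T r N n)
    simpa using this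
  have hcont : ContinuousOn (fun s : ℝ => (s/T)^((2*β-1)/r))
      (Set.uIcc (gmesh T r N 1) (gmesh T r N n)) := by
    apply ContinuousOn.rpow_const (continuousOn_id.div_const T)
    intro x hx
    left
    rw [Set.uIcc_of_le ht1n] at hx
    have : 0 < x := lt_of_lt_of_le ht1pos hx.1
    positivity
  have hGint : IntervalIntegrable (fun s =>
      (Kbig T r β * ((N:ℝ)^(-(1-2*β)))^2) *
        ((s/T)^((2*β-1)/r) * (gmesh T r N n - s)^(-(2*β)))) volume
      (gmesh T r N 1) (gmesh T r N n) :=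
    (hG1.continuousOn_mul hcont).const_mul _
  have hmono := intervalIntegral.integral_mono_on ht1n hF hGint hpt
  -- bound ∫ G
  have hsplit_pt : ∀ s ∈ Set.Icc (gmesh T r N 1) (gmesh T r N n),
      (s/T)^((2*β-1)/r) * (gmesh T r N n - s)^(-(2*β)) ≤
      (gmesh T r N n/(2*T))^((2*β-1)/r) * (gmesh T r N n - s)^(-(2*β))
        + (gmesh T r N n/2)^(-(2*β)) * (s/T)^((2*β-1)/r) := by
    intro s hs
    have hs0 : 0 < s := lt_of_lt_of_le ht1pos hs.1
    have h2T : (0:ℝ) < gmesh T r N n/(2*T) := by positivity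
    have h2n : (0:ℝ) < gmesh T r N n/2 := by positivity
    rcases le_total s (gmesh T r N n/2) with h | h
    · have hx2 : gmesh T r N n/2 ≤ gmesh T r N n - s := by linarith
      have h1 : (gmesh T r N n - s)^(-(2*β)) ≤ (gmesh T r N n/2)^(-(2*β)) :=
        Real.rpow_le_rpow_of_nonpos h2n hx2 (by linarith)
      have h2 : (0:ℝ) ≤ (s/T)^((2*β-1)/r) := Real.rpow_nonneg (by positivity) _
      have h3 : (0:ℝ) ≤ (gmesh T r N n/(2*T))^((2*β-1)/r) * (gmesh T r N n - s)^(-(2*β)) :=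
        mul_nonneg (Real.rpow_nonneg h2T.le _) (Real.rpow_nonneg (by linarith [hs.2]) _)
      nlinarith [mul_le_mul_of_nonneg_left h1 h2]
    · have h1 : (s/T)^((2*β-1)/r) ≤ (gmesh T r N n/(2*T))^((2*β-1)/r) := by
        apply Real.rpow_le_rpow_of_nonpos (by positivity) _ hc0
        rw [div_le_div_iff₀ (by positivity) hT]
        nlinarith
      have h2 : (0:ℝ) ≤ (gmesh T r N n - s)^(-(2*β)) :=
        Real.rpow_nonneg (by linarith [hs.2]) _
      have h3 : (0:ℝ) ≤ (gmesh T r N n/2)^(-(2*β)) * (s/T)^((2*β-1)/r) :=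
        mul_nonneg (Real.rpow_nonneg h2n.le _) (Real.rpow_nonneg (by positivity) _)
      nlinarith [mul_le_mul_of_nonneg_right h1 h2]
  have hJ1int : IntervalIntegrable (fun s : ℝ =>
      (s/T)^((2*β-1)/r) * (gmesh T r N n - s)^(-(2*β))) volume
      (gmesh T r N 1) (gmesh T r N n) := hG1.continuousOn_mul hcont
  have hJc_int : IntervalIntegrable (fun s : ℝ => (s/T)^((2*β-1)/r)) volume
      (gmesh T r N 1) (gmesh T r N n) := hcont.intervalIntegrable
  have hJ2int : IntervalIntegrable (fun s : ℝ =>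
      (gmesh T r N n/(2*T))^((2*β-1)/r) * (gmesh T r N n - s)^(-(2*β))
        + (gmesh T r N n/2)^(-(2*β)) * (s/T)^((2*β-1)/r)) volume
      (gmesh T r N 1) (gmesh T r N n) :=
    (hG1.const_mul _).add (hJc_int.const_mul _)
  have hJmono := intervalIntegral.integral_mono_on ht1n hJ1int hJ2int hsplit_pt
  -- evaluate the two pieces
  have hI1 : (∫ s in (gmesh T r N 1)..(gmesh T r N n), (gmesh T r N n - s)^(-(2*β))) ≤
      (gmesh T r N n)^(1-2*β)/(1-2*β) := by
    rw [intervalIntegral.integral_comp_sub_left (fun v => v^(-(2*β))) (gmesh T r N n)]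
    rw [sub_self]
    rw [integral_rpow (Or.inl (by linarith : (-1:ℝ) < -(2*β)))]
    rw [Real.zero_rpow (ne_of_gt (by linarith) : (-(2*β)+1 : ℝ) ≠ 0)]
    rw [show -(2*β)+1 = 1-2*β by ring, sub_zero]
    apply (div_le_div_iff_of_pos_right hbpos).2
    apply Real.rpow_le_rpow (by linarith) (by linarith [ht1pos]) (by linarith)
  have hI2 : (∫ s in (gmesh T r N 1)..(gmesh T r N n), (s/T)^((2*β-1)/r)) ≤
      T * (gmesh T r N n/T)^((2*β-1)/r+1)/((2*β-1)/r+1) := by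
    rw [show (fun s : ℝ => (s/T)^((2*β-1)/r)) = fun s : ℝ => (fun v : ℝ => v^((2*β-1)/r)) (s/T)
      from rfl]
    rw [intervalIntegral.integral_comp_div (fun v : ℝ => v^((2*β-1)/r)) (ne_of_gt hT)]
    rw [integral_rpow (Or.inl hc1)]
    have h0 : 0 ≤ (gmesh T r N 1/T)^((2*β-1)/r+1) := Real.rpow_nonneg (by positivity) _
    rw [smul_eq_mul]
    have hcp : (0:ℝ) < (2*β-1)/r+1 := by linarith
    have key : ((gmesh T r N n/T)^((2*β-1)/r+1) - (gmesh T r N 1/T)^((2*β-1)/r+1))/((2*β-1)/r+1)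
        ≤ (gmesh T r N n/T)^((2*β-1)/r+1)/((2*β-1)/r+1) := by
      apply (div_le_div_iff_of_pos_right hcp).2
      linarith [h0]
    calc T * (((gmesh T r N n/T)^((2*β-1)/r+1) - (gmesh T r N 1/T)^((2*β-1)/r+1))/((2*β-1)/r+1))
        ≤ T * ((gmesh T r N n/T)^((2*β-1)/r+1)/((2*β-1)/r+1)) :=
          mul_le_mul_of_nonneg_left key hT.le
      _ = T * (gmesh T r N n/T)^((2*β-1)/r+1)/((2*β-1)/r+1) := by ring
  -- algebraic final bound
  have halg : (gmesh T r N n/(2*T))^((2*β-1)/r) * ((gmesh T r N n)^(1-2*β)/(1-2*β))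
      + (gmesh T r N n/2)^(-(2*β)) * (T * (gmesh T r N n/T)^((2*β-1)/r+1)/((2*β-1)/r+1)) ≤
      T^(1-2*β) * (2/(1-2*β) + 2/(1+(2*β-1)/r)) := by
    set w : ℝ := gmesh T r N n/T with hw_def
    have hw0 : 0 < w := by rw [hw_def]; positivity
    have hw1 : w ≤ 1 := by rw [hw_def]; exact div_le_one_of_le₀ htnT hT.le
    have hwcb : w^((2*β-1)/r+(1-2*β)) ≤ 1 := Real.rpow_le_one hw0.le hw1 hcb
    have htn_eq : gmesh T r N n = w * T := by rw [hw_def]; field_simp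
    have hA1 : (gmesh T r N n/(2*T))^((2*β-1)/r) * (gmesh T r N n)^(1-2*β) ≤
        2 * T^(1-2*β) := by
      have e1 : gmesh T r N n/(2*T) = w * (1/2) := by rw [htn_eq]; field_simp
      have e2 : (gmesh T r N n/(2*T))^((2*β-1)/r) =
          w^((2*β-1)/r) * ((1:ℝ)/2)^((2*β-1)/r) := by
        rw [e1, Real.mul_rpow hw0.le (by norm_num)]
      have e3 : (gmesh T r N n)^(1-2*β) = w^(1-2*β) * T^(1-2*β) := by
        rw [htn_eq, Real.mul_rpow hw0.le hT.le]
      have e4 : ((1:ℝ)/2)^((2*β-1)/r) ≤ 2 := by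
        have : ((1:ℝ)/2)^((2*β-1)/r) = 2^(-((2*β-1)/r)) := by
          rw [show (1:ℝ)/2 = 2⁻¹ by norm_num,
            show ((2:ℝ)⁻¹) = (2:ℝ)^(-1 : ℝ) by rw [Real.rpow_neg_one],
            ← Real.rpow_mul (by norm_num : (0:ℝ) ≤ 2)]
          congr 1
          ring
        rw [this]
        calc (2:ℝ)^(-((2*β-1)/r)) ≤ 2^(1:ℝ) :=
              Real.rpow_le_rpow_of_exponent_le (by norm_num) (by linarith)
          _ = 2 := Real.rpow_one 2
      have e5 : w^((2*β-1)/r) * w^(1-2*β) = w^((2*β-1)/r+(1-2*β)) :=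
        (Real.rpow_add hw0 _ _).symm
      calc (gmesh T r N n/(2*T))^((2*β-1)/r) * (gmesh T r N n)^(1-2*β)
          = (w^((2*β-1)/r) * w^(1-2*β)) * (((1:ℝ)/2)^((2*β-1)/r) * T^(1-2*β)) := by
            rw [e2, e3]; ring
        _ = w^((2*β-1)/r+(1-2*β)) * (((1:ℝ)/2)^((2*β-1)/r) * T^(1-2*β)) := by rw [e5]
        _ ≤ 1 * (2 * T^(1-2*β)) := by
            apply mul_le_mul hwcb _ _ (by norm_num)
            · exact mul_le_mul_of_nonneg_right e4 hTb.le
            · exact mul_nonneg (Real.rpow_nonneg (by norm_num) _) hTb.le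
        _ = 2 * T^(1-2*β) := by ring
    have hA2 : (gmesh T r N n/2)^(-(2*β)) * (T * (gmesh T r N n/T)^((2*β-1)/r+1)) ≤
        2 * T^(1-2*β) := by
      have e1 : gmesh T r N n/2 = w * (T/2) := by rw [htn_eq]; ring
      have e2 : (gmesh T r N n/2)^(-(2*β)) = w^(-(2*β)) * (T/2)^(-(2*β)) :=
        e1 ▸ Real.mul_rpow hw0.le (by positivity)
      have e3 : (T/2)^(-(2*β)) = T^(-(2*β)) * 2^(2*β) := by
        rw [Real.div_rpow hT.le (by norm_num), div_eq_mul_inv,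
          ← Real.rpow_neg (by norm_num : (0:ℝ) ≤ 2), show -(-(2*β)) = 2*β by ring]
      have e4 : (2:ℝ)^(2*β) ≤ 2 := by
        calc (2:ℝ)^(2*β) ≤ 2^(1:ℝ) :=
              Real.rpow_le_rpow_of_exponent_le (by norm_num) (by linarith)
          _ = 2 := Real.rpow_one 2
      have e5 : T * T^(-(2*β)) = T^(1-2*β) := by
        nth_rewrite 1 [show T = T^(1:ℝ) from (Real.rpow_one T).symm]
        rw [← Real.rpow_add hT]
        congr 1 <;> ring
      have e6 : w^(-(2*β)) * w^((2*β-1)/r+1) = w^((2*β-1)/r+(1-2*β)) := by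
        rw [← Real.rpow_add hw0]
        congr 1 <;> ring
      calc (gmesh T r N n/2)^(-(2*β)) * (T * (gmesh T r N n/T)^((2*β-1)/r+1))
          = (w^(-(2*β)) * w^((2*β-1)/r+1)) * ((T * T^(-(2*β))) * 2^(2*β)) := by
            rw [e2, e3, ← hw_def]; ring
        _ = w^((2*β-1)/r+(1-2*β)) * (T^(1-2*β) * 2^(2*β)) := by rw [e5, e6]
        _ ≤ 1 * (T^(1-2*β) * 2) := by
            apply mul_le_mul hwcb _ _ (by norm_num)
            · exact mul_le_mul_of_nonneg_left e4 hTb.le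
            · exact mul_nonneg hTb.le (Real.rpow_nonneg (by norm_num) _)
        _ = 2 * T^(1-2*β) := by ring
    have hd1 : (gmesh T r N n/(2*T))^((2*β-1)/r) * ((gmesh T r N n)^(1-2*β)/(1-2*β)) ≤
        2 * T^(1-2*β) / (1-2*β) := by
      rw [show (gmesh T r N n/(2*T))^((2*β-1)/r) * ((gmesh T r N n)^(1-2*β)/(1-2*β)) =
        ((gmesh T r N n/(2*T))^((2*β-1)/r) * (gmesh T r N n)^(1-2*β))/(1-2*β) by ring]
      exact (div_le_div_iff_of_pos_right hbpos).2 hA1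
    have hd2 : (gmesh T r N n/2)^(-(2*β)) *
        (T * (gmesh T r N n/T)^((2*β-1)/r+1)/((2*β-1)/r+1)) ≤
        2 * T^(1-2*β) / (1+(2*β-1)/r) := by
      rw [show (gmesh T r N n/2)^(-(2*β)) *
          (T * (gmesh T r N n/T)^((2*β-1)/r+1)/((2*β-1)/r+1)) =
        ((gmesh T r N n/2)^(-(2*β)) * (T * (gmesh T r N n/T)^((2*β-1)/r+1)))/((2*β-1)/r+1)
        by ring]
      rw [show (1+(2*β-1)/r) = ((2*β-1)/r+1) by ring]
      exact (div_le_div_iff_of_pos_right (by linarith)).2 hA2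
    calc (gmesh T r N n/(2*T))^((2*β-1)/r) * ((gmesh T r N n)^(1-2*β)/(1-2*β))
        + (gmesh T r N n/2)^(-(2*β)) * (T * (gmesh T r N n/T)^((2*β-1)/r+1)/((2*β-1)/r+1))
        ≤ 2 * T^(1-2*β) / (1-2*β) + 2 * T^(1-2*β) / (1+(2*β-1)/r) := add_le_add hd1 hd2
      _ = T^(1-2*β) * (2/(1-2*β) + 2/(1+(2*β-1)/r)) := by ring
  -- assemble
  have hGval : (∫ s in (gmesh T r N 1)..(gmesh T r N n),
      (Kbig T r β * ((N:ℝ)^(-(1-2*β)))^2) *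
        ((s/T)^((2*β-1)/r) * (gmesh T r N n - s)^(-(2*β)))) =
      (Kbig T r β * ((N:ℝ)^(-(1-2*β)))^2) *
      (∫ s in (gmesh T r N 1)..(gmesh T r N n),
        (s/T)^((2*β-1)/r) * (gmesh T r N n - s)^(-(2*β))) :=
    intervalIntegral.integral_const_mul _ _
  have hJval : (∫ s in (gmesh T r N 1)..(gmesh T r N n),
      ((gmesh T r N n/(2*T))^((2*β-1)/r) * (gmesh T r N n - s)^(-(2*β))
        + (gmesh T r N n/2)^(-(2*β)) * (s/T)^((2*β-1)/r))) =
      (gmesh T r N n/(2*T))^((2*β-1)/r) *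
        (∫ s in (gmesh T r N 1)..(gmesh T r N n), (gmesh T r N n - s)^(-(2*β)))
      + (gmesh T r N n/2)^(-(2*β)) *
        (∫ s in (gmesh T r N 1)..(gmesh T r N n), (s/T)^((2*β-1)/r)) := by
    rw [intervalIntegral.integral_add (hG1.const_mul _) (hJc_int.const_mul _),
      intervalIntegral.integral_const_mul, intervalIntegral.integral_const_mul]
  have hJfinal : (∫ s in (gmesh T r N 1)..(gmesh T r N n),
      (s/T)^((2*β-1)/r) * (gmesh T r N n - s)^(-(2*β))) ≤
      T^(1-2*β) * (2/(1-2*β) + 2/(1+(2*β-1)/r)) := by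
    have hnn1 : (0:ℝ) ≤ (gmesh T r N n/(2*T))^((2*β-1)/r) :=
      Real.rpow_nonneg (by positivity) _
    have hnn2 : (0:ℝ) ≤ (gmesh T r N n/2)^(-(2*β)) :=
      Real.rpow_nonneg (by positivity) _
    calc (∫ s in (gmesh T r N 1)..(gmesh T r N n),
        (s/T)^((2*β-1)/r) * (gmesh T r N n - s)^(-(2*β)))
        ≤ (∫ s in (gmesh T r N 1)..(gmesh T r N n),
          ((gmesh T r N n/(2*T))^((2*β-1)/r) * (gmesh T r N n - s)^(-(2*β))
            + (gmesh T r N n/2)^(-(2*β)) * (s/T)^((2*β-1)/r))) := hJmono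
      _ = (gmesh T r N n/(2*T))^((2*β-1)/r) *
            (∫ s in (gmesh T r N 1)..(gmesh T r N n), (gmesh T r N n - s)^(-(2*β)))
          + (gmesh T r N n/2)^(-(2*β)) *
            (∫ s in (gmesh T r N 1)..(gmesh T r N n), (s/T)^((2*β-1)/r)) := hJval
      _ ≤ (gmesh T r N n/(2*T))^((2*β-1)/r) * ((gmesh T r N n)^(1-2*β)/(1-2*β))
          + (gmesh T r N n/2)^(-(2*β)) *
            (T * (gmesh T r N n/T)^((2*β-1)/r+1)/((2*β-1)/r+1)) :=
          add_le_add (mul_le_mul_of_nonneg_left hI1 hnn1)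
            (mul_le_mul_of_nonneg_left hI2 hnn2)
      _ ≤ T^(1-2*β) * (2/(1-2*β) + 2/(1+(2*β-1)/r)) := halg
  have hKNB : (0:ℝ) ≤ Kbig T r β * ((N:ℝ)^(-(1-2*β)))^2 :=
    mul_nonneg (Kbig_pos hT hr hβ0 hβh).le (sq_nonneg _)
  calc (∫ s in (gmesh T r N 1)..(gmesh T r N n),
      (gmesh T r N n - s) ^ (-(2 * β)) *
        ∫ u in (gmesh T r N 1)..(hat s),
          |(s - u) ^ (-β) - (hat s - u) ^ (-β)| ^ 2
            * (hat u) ^ (2 * β - 1) * (u - hat u) ^ (1 - 2 * β))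
      ≤ (∫ s in (gmesh T r N 1)..(gmesh T r N n),
        (Kbig T r β * ((N:ℝ)^(-(1-2*β)))^2) *
          ((s/T)^((2*β-1)/r) * (gmesh T r N n - s)^(-(2*β)))) := hmono
    _ = (Kbig T r β * ((N:ℝ)^(-(1-2*β)))^2) *
        (∫ s in (gmesh T r N 1)..(gmesh T r N n),
          (s/T)^((2*β-1)/r) * (gmesh T r N n - s)^(-(2*β))) := hGval
    _ ≤ (Kbig T r β * ((N:ℝ)^(-(1-2*β)))^2) *
        (T^(1-2*β) * (2/(1-2*β) + 2/(1+(2*β-1)/r))) :=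
        mul_le_mul_of_nonneg_left hJfinal hKNB
    _ = Kbig T r β * (T^(1-2*β) * (2/(1-2*β) + 2/(1+(2*β-1)/r))) *
        ((N:ℝ)^(-(1-2*β)))^2 := by ring
    _ = Kbig T r β * (T^(1-2*β) * (2/(1-2*β) + 2/(1+(2*β-1)/r))) *
        (N:ℝ)^(-(2*(1-2*β))) := by rw [hNBsq]
    _ = Kbig T r β * (T^(1-2*β) * (2/(1-2*β) + 2/(1+(2*β-1)/r))) *
        (N:ℝ)^(-(2*(1-2*β))) := rfl
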